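/- arXiv:2204.02657 — 5 statements merged into one kernel-verified Lean document; each statement's English description precedes it below -/
import Mathlib

section
/- Let Y, Z, W, X be random variables on a probability space (Ω, ℱ, P). Suppose (i) Y and Z are conditionally independent given σ(W,X), and (ii) the completeness condition holds: every integrable σ(W,X)-measurable random variable φ with E[φ | σ(Z,X)] = 0 almost surely satisfies φ = 0 almost surely. Then for every bounded measurable function g, the conditional expectation E[g(Y) | σ(W,X)] is the almost-surely unique integrable σ(W,X)-measurable random variable h satisfying E[h | σ(Z,X)] = E[g(Y) | σ(Z,X)] almost surely; that is, any such h equals E[g(Y) | σ(W,X)] almost surely. -/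
open MeasureTheory Filter

section AuxCondIndep

variable {Ω : Type*} {m0 : MeasurableSpace Ω} {μ : Measure Ω} [IsProbabilityMeasure μ]
variable {m : MeasurableSpace Ω}
lemma bddMeas_integrable {f : Ω → ℝ} (hf : AEStronglyMeasurable[m0] f μ) {C : ℝ}
    (hC : ∀ x, |f x| ≤ C) : Integrable f μ :=
  (integrable_const C).mono' hf (Eventually.of_forall fun x => by
    simpa [Real.norm_eq_abs] using hC x)

lemma keyProd (hm : m ≤ m0) {k c f : Ω → ℝ}
    (hk : Measurable[m0] k) (hkb : ∀ ω, |k ω| ≤ 1)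
    (hc : StronglyMeasurable[m] c) (hcb : ∀ ω, |c ω| ≤ 1)
    (hf : Measurable[m0] f) {C : ℝ} (hfb : ∀ ω, |f ω| ≤ C)
    (hCI : μ[fun ω => f ω * k ω | m] =ᵐ[μ]
      fun ω => (μ[f|m]) ω * (μ[k|m]) ω) :
    ∫ ω, f ω * k ω * c ω ∂μ = ∫ ω, (μ[f|m]) ω * k ω * c ω ∂μ := by
  haveI : SigmaFinite (μ.trim hm) := by infer_instance
  set F : Ω → ℝ := fun ω => f ω * k ω with hF
  have hFmeas : Measurable[m0] F := hf.mul hk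
  have hFb : ∀ ω, |F ω| ≤ C := fun ω => by
    have h1 : |f ω * k ω| = |f ω| * |k ω| := abs_mul _ _
    have h0 : (0:ℝ) ≤ |f ω| := abs_nonneg _
    calc |F ω| = |f ω| * |k ω| := h1
    _ ≤ |f ω| * 1 := by nlinarith [hkb ω, abs_nonneg (k ω)]
    _ = |f ω| := mul_one _
    _ ≤ C := hfb ω
  have hFi : Integrable F μ := bddMeas_integrable hFmeas.aestronglyMeasurable hFb
  have hfi : Integrable f μ := bddMeas_integrable hf.aestronglyMeasurable hfb
  have hki : Integrable k μ := bddMeas_integrable hk.aestronglyMeasurable hkb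
  have hcF : Integrable (c * F) μ := by
    have := hFi.bdd_mul ((hc.mono hm).aestronglyMeasurable)
      (c := 1) (Eventually.of_forall fun x => by simpa [Real.norm_eq_abs] using hcb x)
    exact this
  have h1 : μ[c * F|m] =ᵐ[μ] c * μ[F|m] :=
    condExp_mul_of_stronglyMeasurable_left hc hcF hFi
  have lhs_eq : ∫ ω, f ω * k ω * c ω ∂μ
      = ∫ ω, c ω * ((μ[f|m]) ω * (μ[k|m]) ω) ∂μ := by
    have e1 : ∫ ω, f ω * k ω * c ω ∂μ = ∫ ω, (c * F) ω ∂μ := by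
      congr 1; funext ω; simp [hF]; ring
    rw [e1, ← integral_condExp hm (μ := μ) (f := c * F), integral_congr_ae h1]
    refine integral_congr_ae ?_
    filter_upwards [hCI] with ω hω
    simp only [Pi.mul_apply]
    rw [hω]
  -- RHS
  set G : Ω → ℝ := fun ω => c ω * (μ[f|m]) ω with hG
  have hGsm : StronglyMeasurable[m] G := hc.mul stronglyMeasurable_condExp
  have hGi : Integrable G μ :=
    integrable_condExp.bdd_mul ((hc.mono hm).aestronglyMeasurable)
      (c := 1) (Eventually.of_forall fun x => by simpa [Real.norm_eq_abs] using hcb x)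
  have hGki : Integrable (G * k) μ := by
    have := hGi.bdd_mul hk.aestronglyMeasurable
      (c := 1) (Eventually.of_forall fun x => by simpa [Real.norm_eq_abs] using hkb x)
    refine this.congr (Eventually.of_forall fun ω => ?_)
    simp [mul_comm]
  have h2 : μ[G * k|m] =ᵐ[μ] G * μ[k|m] :=
    condExp_mul_of_stronglyMeasurable_left hGsm hGki hki
  have rhs_eq : ∫ ω, (μ[f|m]) ω * k ω * c ω ∂μ
      = ∫ ω, c ω * ((μ[f|m]) ω * (μ[k|m]) ω) ∂μ := by
    have e1 : ∫ ω, (μ[f|m]) ω * k ω * c ω ∂μ = ∫ ω, (G * k) ω ∂μ := by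
      congr 1; funext ω; simp [hG]; ring
    rw [e1, ← integral_condExp hm (μ := μ) (f := G * k), integral_congr_ae h2]
    refine integral_congr_ae (Eventually.of_forall fun ω => ?_)
    simp [hG]; ring
  rw [lhs_eq, rhs_eq]


lemma CIsimple (hm : m ≤ m0) {Y k : Ω → ℝ} (hY : Measurable[m0] Y)
    (hk : Measurable[m0] k) (hkb : ∀ ω, |k ω| ≤ 1)
    (hCI : ∀ A : Set ℝ, MeasurableSet A →
      μ[fun ω => A.indicator (fun _ => (1:ℝ)) (Y ω) * k ω | m] =ᵐ[μ]
      fun ω => (μ[fun ω' => A.indicator (fun _ => (1:ℝ)) (Y ω') | m]) ω * (μ[k|m]) ω)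
    (s : SimpleFunc ℝ ℝ) :
    μ[fun ω => s (Y ω) * k ω | m] =ᵐ[μ]
      fun ω => (μ[fun ω' => s (Y ω') | m]) ω * (μ[k|m]) ω := by
  haveI : SigmaFinite (μ.trim hm) := by infer_instance
  induction s using SimpleFunc.induction with
  | @const c A hA =>
    -- the simple function is the indicator of A with value c
    have hcoe : ∀ y, (SimpleFunc.piecewise A hA (SimpleFunc.const ℝ c)
        (SimpleFunc.const ℝ (0:ℝ))) y = c * A.indicator (fun _ => (1:ℝ)) y := by
      intro y
      by_cases hy : y ∈ A <;>
        simp [SimpleFunc.coe_piecewise, Set.piecewise, Set.indicator, hy]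
    have e1 : (fun ω => (SimpleFunc.piecewise A hA (SimpleFunc.const ℝ c)
          (SimpleFunc.const ℝ (0:ℝ))) (Y ω) * k ω)
        = c • (fun ω => A.indicator (fun _ => (1:ℝ)) (Y ω) * k ω) := by
      funext ω; by_cases hy : Y ω ∈ A <;> simp [hcoe, smul_eq_mul, Set.indicator, hy] <;> ring
    have e2 : (fun ω' => (SimpleFunc.piecewise A hA (SimpleFunc.const ℝ c)
          (SimpleFunc.const ℝ (0:ℝ))) (Y ω'))
        = c • (fun ω' => A.indicator (fun _ => (1:ℝ)) (Y ω')) := by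
      funext ω; by_cases hy : Y ω ∈ A <;> simp [hcoe, smul_eq_mul, Set.indicator, hy]
    rw [e1, e2]
    calc μ[c • (fun ω => A.indicator (fun _ => (1:ℝ)) (Y ω) * k ω)|m]
        =ᵐ[μ] c • μ[(fun ω => A.indicator (fun _ => (1:ℝ)) (Y ω) * k ω)|m] :=
          condExp_smul c _ m
      _ =ᵐ[μ] fun ω => (μ[c • (fun ω' => A.indicator (fun _ => (1:ℝ)) (Y ω'))|m]) ω
            * (μ[k|m]) ω := by
          filter_upwards [hCI A hA,
            (condExp_smul (μ := μ) (m := m) c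
              (fun ω' => A.indicator (fun _ => (1:ℝ)) (Y ω')))] with ω h1 h2
          simp only [Pi.smul_apply, smul_eq_mul] at *
          rw [h1, h2]; ring
  | @add f g hdisj ihf ihg =>
    obtain ⟨Cf, hCf⟩ := f.exists_forall_norm_le
    obtain ⟨Cg, hCg⟩ := g.exists_forall_norm_le
    have hfY : Integrable (fun ω => f (Y ω) * k ω) μ := by
      refine (integrable_const (Cf : ℝ)).mono'
        ((f.measurable.comp hY).mul hk).aestronglyMeasurable
        (Eventually.of_forall fun ω => ?_)
      have := hCf (Y ω); have := hkb ω
      simp only [Real.norm_eq_abs, abs_mul] at *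
      nlinarith [abs_nonneg (f (Y ω)), abs_nonneg (k ω)]
    have hgY : Integrable (fun ω => g (Y ω) * k ω) μ := by
      refine (integrable_const (Cg : ℝ)).mono'
        ((g.measurable.comp hY).mul hk).aestronglyMeasurable
        (Eventually.of_forall fun ω => ?_)
      have := hCg (Y ω); have := hkb ω
      simp only [Real.norm_eq_abs, abs_mul] at *
      nlinarith [abs_nonneg (g (Y ω)), abs_nonneg (k ω)]
    have hfY' : Integrable (fun ω => f (Y ω)) μ := by
      refine (integrable_const (Cf : ℝ)).mono'
        (f.measurable.comp hY).aestronglyMeasurable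
        (Eventually.of_forall fun ω => by simpa using hCf (Y ω))
    have hgY' : Integrable (fun ω => g (Y ω)) μ := by
      refine (integrable_const (Cg : ℝ)).mono'
        (g.measurable.comp hY).aestronglyMeasurable
        (Eventually.of_forall fun ω => by simpa using hCg (Y ω))
    have e1 : (fun ω => (f + g) (Y ω) * k ω)
        = (fun ω => f (Y ω) * k ω) + fun ω => g (Y ω) * k ω := by
      funext ω; simp [SimpleFunc.coe_add]; ring
    have e2 : (fun ω' => (f + g) (Y ω')) = (fun ω' => f (Y ω')) + fun ω' => g (Y ω') := by
      funext ω; simp [SimpleFunc.coe_add]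
    rw [e1, e2]
    calc μ[(fun ω => f (Y ω) * k ω) + (fun ω => g (Y ω) * k ω)|m]
        =ᵐ[μ] μ[fun ω => f (Y ω) * k ω|m] + μ[fun ω => g (Y ω) * k ω|m] :=
          condExp_add hfY hgY m
      _ =ᵐ[μ] fun ω => (μ[(fun ω' => f (Y ω')) + (fun ω' => g (Y ω'))|m]) ω * (μ[k|m]) ω := by
          filter_upwards [ihf, ihg, condExp_add (μ := μ) (m := m) hfY' hgY'] with ω h1 h2 h3
          simp only [Pi.add_apply] at *
          rw [h3, h1, h2]; ring
lemma rectInt (hm : m ≤ m0) {Y k c : Ω → ℝ} (hY : Measurable[m0] Y)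
    (hk : Measurable[m0] k) (hkb : ∀ ω, |k ω| ≤ 1)
    (hc : StronglyMeasurable[m] c) (hcb : ∀ ω, |c ω| ≤ 1)
    (hCI : ∀ A : Set ℝ, MeasurableSet A →
      μ[fun ω => A.indicator (fun _ => (1:ℝ)) (Y ω) * k ω | m] =ᵐ[μ]
      fun ω => (μ[fun ω' => A.indicator (fun _ => (1:ℝ)) (Y ω') | m]) ω * (μ[k|m]) ω)
    {g : ℝ → ℝ} (hg : Measurable g) {C : ℝ} (hgb : ∀ x, |g x| ≤ C) :
    ∫ ω, g (Y ω) * k ω * c ω ∂μ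
      = ∫ ω, (μ[fun ω' => g (Y ω')|m]) ω * k ω * c ω ∂μ := by
  haveI : SigmaFinite (μ.trim hm) := by infer_instance
  have hC0 : 0 ≤ C := le_trans (abs_nonneg _) (hgb 0)
  -- simple function case
  have hsimple : ∀ s : SimpleFunc ℝ ℝ,
      ∫ ω, s (Y ω) * k ω * c ω ∂μ
        = ∫ ω, (μ[fun ω' => s (Y ω')|m]) ω * k ω * c ω ∂μ := by
    intro s
    obtain ⟨Cs, hCs⟩ := s.exists_forall_norm_le
    exact keyProd hm hk hkb hc hcb (s.measurable.comp hY)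
      (fun ω => by simpa [Real.norm_eq_abs] using hCs (Y ω))
      (CIsimple hm hY hk hkb hCI s)
  -- approximating sequence
  set sn : ℕ → SimpleFunc ℝ ℝ := fun n =>
    SimpleFunc.approxOn g hg Set.univ 0 (Set.mem_univ 0) n with hsn
  have hptw : ∀ x, Tendsto (fun n => (sn n) x) atTop (nhds (g x)) := fun x =>
    SimpleFunc.tendsto_approxOn hg (Set.mem_univ 0) (by simp)
  have hbd : ∀ n x, |(sn n) x| ≤ 2 * C := by
    intro n x
    have := SimpleFunc.norm_approxOn_zero_le hg (Set.mem_univ 0) x n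
    have h2 := hgb x
    simp only [Real.norm_eq_abs] at this
    linarith
  -- integrability facts
  have hsaeY : ∀ n, AEStronglyMeasurable[m0] (fun ω => (sn n) (Y ω)) μ :=
    fun n => ((sn n).measurable.comp hY).aestronglyMeasurable
  have hgY : Measurable[m0] fun ω => g (Y ω) := hg.comp hY
  have hgYi : Integrable (fun ω => g (Y ω)) μ :=
    (integrable_const C).mono' hgY.aestronglyMeasurable
      (Eventually.of_forall fun ω => by simpa [Real.norm_eq_abs] using hgb (Y ω))
  have hsnYi : ∀ n, Integrable (fun ω => (sn n) (Y ω)) μ := fun n =>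
    (integrable_const (2*C)).mono' (hsaeY n)
      (Eventually.of_forall fun ω => by simpa [Real.norm_eq_abs] using hbd n (Y ω))
  -- LHS convergence
  have hL : Tendsto (fun n => ∫ ω, (sn n) (Y ω) * k ω * c ω ∂μ) atTop
      (nhds (∫ ω, g (Y ω) * k ω * c ω ∂μ)) := by
    refine tendsto_integral_of_dominated_convergence (fun _ => 2*C)
      (fun n => ((hsaeY n).mul hk.aestronglyMeasurable).mul
        ((hc.mono hm).aestronglyMeasurable))
      (integrable_const _) (fun n => Eventually.of_forall fun ω => ?_)
      (Eventually.of_forall fun ω => ?_)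
    · have h1 := hbd n (Y ω); have h2 := hkb ω; have h3 := hcb ω
      simp only [Real.norm_eq_abs, abs_mul]
      have : |(sn n) (Y ω)| * |k ω| * |c ω| ≤ (2*C) * 1 * 1 := by
        gcongr <;> positivity
      linarith
    · exact ((hptw (Y ω)).mul_const _).mul_const _
  -- error bound convergence
  have hE : Tendsto (fun n => ∫ ω, |(sn n) (Y ω) - g (Y ω)| ∂μ) atTop (nhds 0) := by
    have := tendsto_integral_of_dominated_convergence (μ := μ)
      (F := fun n ω => |(sn n) (Y ω) - g (Y ω)|) (f := fun _ => (0:ℝ))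
      (fun _ => 3*C)
      (fun n => ((hsaeY n).sub hgY.aestronglyMeasurable).norm.congr
        (Eventually.of_forall fun ω => by simp [Real.norm_eq_abs]))
      (integrable_const _)
      (fun n => Eventually.of_forall fun ω => by
        have h1 := hbd n (Y ω); have h2 := hgb (Y ω)
        simp only [Real.norm_eq_abs, abs_abs]
        calc |(sn n) (Y ω) - g (Y ω)| ≤ |(sn n) (Y ω)| + |g (Y ω)| := abs_sub _ _
          _ ≤ 3*C := by linarith)
      (Eventually.of_forall fun ω => by
        have : Tendsto (fun n => (sn n) (Y ω) - g (Y ω)) atTop (nhds 0) := by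
          simpa using (hptw (Y ω)).sub_const (g (Y ω))
        simpa using this.abs)
    simpa using this
  -- RHS convergence
  have hR : Tendsto (fun n => ∫ ω, (sn n) (Y ω) * k ω * c ω ∂μ) atTop
      (nhds (∫ ω, (μ[fun ω' => g (Y ω')|m]) ω * k ω * c ω ∂μ)) := by
    rw [show (fun n => ∫ ω, (sn n) (Y ω) * k ω * c ω ∂μ)
        = fun n => ∫ ω, (μ[fun ω' => (sn n) (Y ω')|m]) ω * k ω * c ω ∂μ from
      funext fun n => hsimple (sn n)]
    have key : ∀ n, |(∫ ω, (μ[fun ω' => (sn n) (Y ω')|m]) ω * k ω * c ω ∂μ)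
        - ∫ ω, (μ[fun ω' => g (Y ω')|m]) ω * k ω * c ω ∂μ|
        ≤ ∫ ω, |(sn n) (Y ω) - g (Y ω)| ∂μ := by
      intro n
      have hced : Integrable (fun ω => ((μ[fun ω' => (sn n) (Y ω')|m]) ω
          - (μ[fun ω' => g (Y ω')|m]) ω) * k ω * c ω) μ := by
        have h0 : Integrable (fun ω => (μ[fun ω' => (sn n) (Y ω')|m]) ω
            - (μ[fun ω' => g (Y ω')|m]) ω) μ := integrable_condExp.sub integrable_condExp
        have h1 := (h0.bdd_mul hk.aestronglyMeasurable
          (c := 1) (Eventually.of_forall fun x => by simpa [Real.norm_eq_abs] using hkb x))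
        have h2 := h1.bdd_mul ((hc.mono hm).aestronglyMeasurable)
          (c := 1) (Eventually.of_forall fun x => by simpa [Real.norm_eq_abs] using hcb x)
        refine h2.congr (Eventually.of_forall fun ω => ?_); ring
      have hint1 : Integrable (fun ω => (μ[fun ω' => (sn n) (Y ω')|m]) ω * k ω * c ω) μ := by
        have h1 := (integrable_condExp
          (f := fun ω' => (sn n) (Y ω')) (m := m) (μ := μ)).bdd_mul hk.aestronglyMeasurable
          (c := 1) (Eventually.of_forall fun x => by simpa [Real.norm_eq_abs] using hkb x)
        have h2 := h1.bdd_mul ((hc.mono hm).aestronglyMeasurable)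
          (c := 1) (Eventually.of_forall fun x => by simpa [Real.norm_eq_abs] using hcb x)
        refine h2.congr (Eventually.of_forall fun ω => ?_); ring
      have hint2 : Integrable (fun ω => (μ[fun ω' => g (Y ω')|m]) ω * k ω * c ω) μ := by
        have h1 := (integrable_condExp
          (f := fun ω' => g (Y ω')) (m := m) (μ := μ)).bdd_mul hk.aestronglyMeasurable
          (c := 1) (Eventually.of_forall fun x => by simpa [Real.norm_eq_abs] using hkb x)
        have h2 := h1.bdd_mul ((hc.mono hm).aestronglyMeasurable)
          (c := 1) (Eventually.of_forall fun x => by simpa [Real.norm_eq_abs] using hcb x)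
        refine h2.congr (Eventually.of_forall fun ω => ?_); ring
      rw [← integral_sub hint1 hint2]
      have e3 : (fun ω => (μ[fun ω' => (sn n) (Y ω')|m]) ω * k ω * c ω
          - (μ[fun ω' => g (Y ω')|m]) ω * k ω * c ω)
          = fun ω => ((μ[fun ω' => (sn n) (Y ω')|m]) ω
            - (μ[fun ω' => g (Y ω')|m]) ω) * k ω * c ω := by
        funext ω; ring
      rw [e3]
      calc |∫ ω, ((μ[fun ω' => (sn n) (Y ω')|m]) ω
              - (μ[fun ω' => g (Y ω')|m]) ω) * k ω * c ω ∂μ|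
          ≤ ∫ ω, |((μ[fun ω' => (sn n) (Y ω')|m]) ω
              - (μ[fun ω' => g (Y ω')|m]) ω) * k ω * c ω| ∂μ := by
            simpa only [Real.norm_eq_abs] using
              norm_integral_le_integral_norm (μ := μ)
                (f := fun ω => ((μ[fun ω' => (sn n) (Y ω')|m]) ω
                  - (μ[fun ω' => g (Y ω')|m]) ω) * k ω * c ω)
        _ ≤ ∫ ω, |(μ[fun ω' => (sn n) (Y ω')|m]) ω - (μ[fun ω' => g (Y ω')|m]) ω| ∂μ := by
            refine integral_mono hced.abs
              (integrable_condExp.sub integrable_condExp).abs fun ω => ?_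
            have h2 := hkb ω; have h3 := hcb ω
            simp only [abs_mul]
            nlinarith [abs_nonneg ((μ[fun ω' => (sn n) (Y ω')|m]) ω
              - (μ[fun ω' => g (Y ω')|m]) ω), abs_nonneg (k ω), abs_nonneg (c ω),
              mul_nonneg (abs_nonneg ((μ[fun ω' => (sn n) (Y ω')|m]) ω
              - (μ[fun ω' => g (Y ω')|m]) ω)) (abs_nonneg (k ω))]
        _ = ∫ ω, |(μ[(fun ω' => (sn n) (Y ω')) - (fun ω' => g (Y ω'))|m]) ω| ∂μ := by
            refine integral_congr_ae ?_
            filter_upwards [condExp_sub (m := m) (hsnYi n) hgYi] with ω hω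
            rw [Pi.sub_apply] at hω; rw [← hω]
        _ ≤ ∫ ω, |((fun ω' => (sn n) (Y ω')) - fun ω' => g (Y ω')) ω| ∂μ :=
            integral_abs_condExp_le _
        _ = ∫ ω, |(sn n) (Y ω) - g (Y ω)| ∂μ := by simp
    have hsq : Tendsto (fun n => |(∫ ω, (μ[fun ω' => (sn n) (Y ω')|m]) ω * k ω * c ω ∂μ)
        - ∫ ω, (μ[fun ω' => g (Y ω')|m]) ω * k ω * c ω ∂μ|) atTop (nhds 0) :=
      squeeze_zero (fun n => abs_nonneg _) key hE
    rw [tendsto_iff_norm_sub_tendsto_zero]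
    simpa [Real.norm_eq_abs] using hsq
  exact tendsto_nhds_unique hL hR
lemma allSets {Z X : Ω → ℝ} (hZ : Measurable[m0] Z) (hX : Measurable[m0] X)
    {F G : Ω → ℝ} (hFi : Integrable F μ) (hGi : Integrable G μ)
    (hrect : ∀ B Cs : Set ℝ, MeasurableSet B → MeasurableSet Cs →
      ∫ ω in Z ⁻¹' B ∩ X ⁻¹' Cs, F ω ∂μ = ∫ ω in Z ⁻¹' B ∩ X ⁻¹' Cs, G ω ∂μ) :
    ∀ s, MeasurableSet[MeasurableSpace.comap (fun ω => (Z ω, X ω)) inferInstance] s →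
      ∫ ω in s, F ω ∂μ = ∫ ω in s, G ω ∂μ := by
  have hpair : Measurable[m0] fun ω => (Z ω, X ω) := hZ.prodMk hX
  rintro s ⟨S, hS, rfl⟩
  revert hS
  have huniv : ∫ ω, F ω ∂μ = ∫ ω, G ω ∂μ := by
    have := hrect Set.univ Set.univ MeasurableSet.univ MeasurableSet.univ
    simpa using this
  refine fun hS => MeasurableSpace.induction_on_inter
    (C := fun S _ => ∫ ω in (fun ω => (Z ω, X ω)) ⁻¹' S, F ω ∂μ
      = ∫ ω in (fun ω => (Z ω, X ω)) ⁻¹' S, G ω ∂μ)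
    generateFrom_prod.symm isPiSystem_prod (by simp) ?_ ?_ ?_ _ hS
  · rintro t ⟨B, hB, Cs, hCs, rfl⟩
    have hpre : (fun ω => (Z ω, X ω)) ⁻¹' (B ×ˢ Cs) = Z ⁻¹' B ∩ X ⁻¹' Cs := by
      ext ω; simp [Set.mem_prod]
    rw [hpre]
    exact hrect B Cs hB hCs
  · intro t ht hCt
    have hmt : MeasurableSet[m0] ((fun ω => (Z ω, X ω)) ⁻¹' t) := hpair ht
    have hpre : (fun ω => (Z ω, X ω)) ⁻¹' tᶜ = ((fun ω => (Z ω, X ω)) ⁻¹' t)ᶜ := rfl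
    rw [hpre]
    have h1 := integral_add_compl hmt hFi
    have h2 := integral_add_compl hmt hGi
    linarith [hCt, huniv]
  · intro f hdisj hfm hCf
    have hmf : ∀ i, MeasurableSet[m0] ((fun ω => (Z ω, X ω)) ⁻¹' f i) :=
      fun i => hpair (hfm i)
    have hpre : (fun ω => (Z ω, X ω)) ⁻¹' (⋃ i, f i)
        = ⋃ i, (fun ω => (Z ω, X ω)) ⁻¹' f i := by simp [Set.preimage_iUnion]
    rw [hpre, integral_iUnion hmf (fun i j hij => Set.disjoint_left.2 ?_) hFi.integrableOn,
      integral_iUnion hmf (fun i j hij => Set.disjoint_left.2 ?_) hGi.integrableOn]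
    · exact tsum_congr fun i => hCf i
    · intro ω h1 h2
      exact Set.disjoint_left.1 (hdisj hij) h1 h2
    · intro ω h1 h2
      exact Set.disjoint_left.1 (hdisj hij) h1 h2

end AuxCondIndep

/-- Conditional independence of `f` and `g` given the sub-σ-algebra `m`:
for all measurable sets `A`, `B`, a.s.
`P(f ∈ A, g ∈ B | m) = P(f ∈ A | m) · P(g ∈ B | m)`. -/
def CondIndepGiven {Ω α β : Type*} [MeasurableSpace Ω] [MeasurableSpace α] [MeasurableSpace β]
    (μ : Measure Ω) (m : MeasurableSpace Ω) (f : Ω → α) (g : Ω → β) : Prop :=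
  ∀ (A : Set α) (B : Set β), MeasurableSet A → MeasurableSet B →
    μ[fun ω => A.indicator (fun _ => (1 : ℝ)) (f ω) * B.indicator (fun _ => (1 : ℝ)) (g ω) | m]
      =ᵐ[μ]
    fun ω => (μ[fun ω' => A.indicator (fun _ => (1 : ℝ)) (f ω') | m]) ω *
             (μ[fun ω' => B.indicator (fun _ => (1 : ℝ)) (g ω') | m]) ω

/-- Suppose (i) `Y ⟂ Z | σ(W,X)` and (ii) completeness: every integrable
`σ(W,X)`-measurable `φ` with `E[φ | σ(Z,X)] = 0` a.s. satisfies `φ = 0` a.s.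
Then for every bounded measurable `g`, any integrable `σ(W,X)`-measurable `h`
with `E[h | σ(Z,X)] = E[g(Y) | σ(Z,X)]` a.s. equals `E[g(Y) | σ(W,X)]` a.s. -/
theorem stmt_1 {Ω : Type*} [MeasurableSpace Ω] (μ : Measure Ω) [IsProbabilityMeasure μ]
    (Y Z W X : Ω → ℝ) (hY : Measurable Y) (hZ : Measurable Z)
    (hW : Measurable W) (hX : Measurable X)
    (hCI : CondIndepGiven μ
      (MeasurableSpace.comap (fun ω => (W ω, X ω)) inferInstance) Y Z)
    (hComplete : ∀ φ : Ω → ℝ, Integrable φ μ →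
      Measurable[MeasurableSpace.comap (fun ω => (W ω, X ω)) inferInstance] φ →
      (μ[φ | MeasurableSpace.comap (fun ω => (Z ω, X ω)) inferInstance] =ᵐ[μ] 0) →
      φ =ᵐ[μ] 0) :
    ∀ g : ℝ → ℝ, Measurable g → (∃ C, ∀ x, |g x| ≤ C) →
      ∀ h : Ω → ℝ, Integrable h μ →
        Measurable[MeasurableSpace.comap (fun ω => (W ω, X ω)) inferInstance] h →
        (μ[h | MeasurableSpace.comap (fun ω => (Z ω, X ω)) inferInstance]
          =ᵐ[μ]
         μ[fun ω => g (Y ω) | MeasurableSpace.comap (fun ω => (Z ω, X ω)) inferInstance]) →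
        h =ᵐ[μ]
          μ[fun ω => g (Y ω) | MeasurableSpace.comap (fun ω => (W ω, X ω)) inferInstance] := by
  rename_i m0 hPμ
  intro g hg hgbdd h hhi hhm hhe
  obtain ⟨C, hC⟩ := hgbdd
  set mWX : MeasurableSpace Ω :=
    MeasurableSpace.comap (fun ω => (W ω, X ω)) inferInstance with hmWXdef
  set mZX : MeasurableSpace Ω :=
    MeasurableSpace.comap (fun ω => (Z ω, X ω)) inferInstance with hmZXdef
  have hmWX : mWX ≤ m0 := (hW.prodMk hX).comap_le
  have hmZX : mZX ≤ m0 := (hZ.prodMk hX).comap_le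
  haveI : SigmaFinite (μ.trim hmWX) := by infer_instance
  haveI : SigmaFinite (μ.trim hmZX) := by infer_instance
  set GY : Ω → ℝ := fun ω => g (Y ω) with hGYdef
  have hGYm : Measurable[m0] GY := hg.comp hY
  have hGYi : Integrable GY μ := bddMeas_integrable hGYm.aestronglyMeasurable
    (fun ω => hC (Y ω))
  -- X is mWX-measurable
  have hXm : Measurable[mWX] X := by
    have hpair : Measurable[mWX] fun ω => (W ω, X ω) :=
      Measurable.of_comap_le le_rfl
    exact measurable_snd.comp hpair
  -- Step 1: set-integral identity on all mZX-sets
  have step1 : ∀ s, MeasurableSet[mZX] s →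
      ∫ ω in s, (μ[GY|mWX]) ω ∂μ = ∫ ω in s, GY ω ∂μ := by
    refine allSets hZ hX integrable_condExp hGYi ?_
    intro B Cs hB hCs
    set k : Ω → ℝ := fun ω => B.indicator (fun _ => (1:ℝ)) (Z ω) with hkdef
    set c : Ω → ℝ := fun ω => Cs.indicator (fun _ => (1:ℝ)) (X ω) with hcdef
    have hkm : Measurable[m0] k := (measurable_const.indicator hB).comp hZ
    have hkb : ∀ ω, |k ω| ≤ 1 := fun ω => by
      by_cases hω : Z ω ∈ B <;> simp [hkdef, Set.indicator, hω]
    have hcm : StronglyMeasurable[mWX] c :=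
      ((measurable_const.indicator hCs).comp hXm).stronglyMeasurable
    have hcb : ∀ ω, |c ω| ≤ 1 := fun ω => by
      by_cases hω : X ω ∈ Cs <;> simp [hcdef, Set.indicator, hω]
    have hrect := rectInt hmWX hY hkm hkb hcm hcb
      (fun A hA => hCI A B hA hB) hg hC
    have hms : MeasurableSet[m0] (Z ⁻¹' B ∩ X ⁻¹' Cs) := (hZ hB).inter (hX hCs)
    have hindF : ∀ F : Ω → ℝ, ∫ ω in Z ⁻¹' B ∩ X ⁻¹' Cs, F ω ∂μ
        = ∫ ω, F ω * k ω * c ω ∂μ := by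
      intro F
      rw [← @integral_indicator Ω ℝ m0 _ _ F _ μ hms]
      refine integral_congr_ae (Eventually.of_forall fun ω => ?_)
      by_cases h1 : Z ω ∈ B <;> by_cases h2 : X ω ∈ Cs <;>
        simp [Set.indicator, hkdef, hcdef, h1, h2]
    rw [hindF, hindF]
    exact hrect.symm
  -- Step 2: tower property through mZX
  have step2 : μ[μ[GY|mWX]|mZX] =ᵐ[μ] μ[GY|mZX] := by
    refine ae_eq_condExp_of_forall_setIntegral_eq (m := mZX) (m₀ := m0) (μ := μ) hmZX hGYi
      (fun s _ _ => integrable_condExp.restrict)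
      (fun s hs _ => ?_)
      (stronglyMeasurable_condExp.aestronglyMeasurable)
    rw [setIntegral_condExp hmZX integrable_condExp hs]
    exact step1 s hs
  -- Step 3: completeness
  have hφ : (fun ω => h ω - (μ[GY|mWX]) ω) =ᵐ[μ] 0 := by
    refine hComplete _ (hhi.sub integrable_condExp)
      (hhm.sub stronglyMeasurable_condExp.measurable) ?_
    have hsub : μ[h - μ[GY|mWX]|mZX] =ᵐ[μ] μ[h|mZX] - μ[μ[GY|mWX]|mZX] :=
      condExp_sub hhi integrable_condExp mZX
    have heq : (fun ω => h ω - (μ[GY|mWX]) ω) = h - μ[GY|mWX] := rfl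
    rw [heq]
    filter_upwards [hsub, hhe, step2] with ω h1 h2 h3
    simp only [Pi.sub_apply, Pi.zero_apply] at *
    rw [h1, h2, h3, sub_self]
  filter_upwards [hφ] with ω hω
  have : h ω - (μ[GY|mWX]) ω = 0 := hω
  linarith
end

section
/- Let R, Y, W, V be random variables on a probability space (Ω, ℱ, P) with R taking values in {0,1}, let π(V) be a σ(V)-measurable version of E[R | σ(V)], and suppose there is δ ∈ (0,1) with δ ≤ π(V) ≤ 1 − δ almost surely. Suppose (Y,W) is conditionally independent of R given σ(V). Let u and s be measurable functions such that u(Y,V) and s(W,V) are integrable and E[u(Y,V)] = E[s(W,V)]. Then E[ R · u(Y,V) / π(V) − (1 − R) · s(W,V) / (1 − π(V)) ] = 0. -/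
open MeasureTheory
open scoped NNReal ENNReal

theorem ipw_key {Ω : Type*} [mΩ : MeasurableSpace Ω] (μ : Measure Ω) [IsProbabilityMeasure μ]
    (YW : Ω → ℝ × ℝ) (V : Ω → ℝ) (hYW : Measurable YW) (hV : Measurable V)
    (ρ q : Ω → ℝ) (hρ : Measurable ρ) (hρ01 : ∀ ω, 0 ≤ ρ ω ∧ ρ ω ≤ 1)
    (hq : Measurable[MeasurableSpace.comap V inferInstance] q)
    (hq01 : ∀ᵐ ω ∂μ, 0 ≤ q ω ∧ q ω ≤ 1)
    (hCI : ∀ A : Set (ℝ × ℝ), MeasurableSet A →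
      μ[fun ω => A.indicator (fun _ => (1:ℝ)) (YW ω) * ρ ω | MeasurableSpace.comap V inferInstance] =ᵐ[μ]
      fun ω => (μ[fun ω' => A.indicator (fun _ => (1:ℝ)) (YW ω') | MeasurableSpace.comap V inferInstance]) ω * q ω)
    (F : Ω → ℝ) (hF : Measurable[MeasurableSpace.comap (fun ω => (YW ω, V ω)) inferInstance] F) :
    ∫ ω, ρ ω * F ω ∂μ = ∫ ω, q ω * F ω ∂μ := by
  have hm : MeasurableSpace.comap V inferInstance ≤ mΩ := hV.comap_le
  have hT : Measurable (fun ω => (YW ω, V ω)) := hYW.prodMk hV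
  have hm' : MeasurableSpace.comap (fun ω => (YW ω, V ω)) inferInstance ≤ mΩ := hT.comap_le
  have hqm : Measurable q := hq.mono hm le_rfl
  -- the key set-integral equality
  have key : ∀ (A : Set (ℝ × ℝ)) (B : Set ℝ), MeasurableSet A → MeasurableSet B →
      ∫ ω in YW ⁻¹' A ∩ V ⁻¹' B, ρ ω ∂μ = ∫ ω in YW ⁻¹' A ∩ V ⁻¹' B, q ω ∂μ := by
    intro A B hA hB
    have hBm : MeasurableSet[MeasurableSpace.comap V inferInstance] (V ⁻¹' B) := ⟨B, hB, rfl⟩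
    have hgmeas : Measurable (fun ω => A.indicator (fun _ => (1:ℝ)) (YW ω)) :=
      (measurable_const.indicator hA).comp hYW
    have hgbd : ∀ ω, ‖A.indicator (fun _ => (1:ℝ)) (YW ω)‖ ≤ 1 := by
      intro ω; by_cases h : YW ω ∈ A <;> simp [Set.indicator_of_mem, Set.indicator_of_notMem, h]
    have hgint : Integrable (fun ω => A.indicator (fun _ => (1:ℝ)) (YW ω)) μ :=
      ⟨hgmeas.aestronglyMeasurable, HasFiniteIntegral.of_bounded (C := 1) (ae_of_all _ hgbd)⟩
    have hρgint : Integrable (fun ω => A.indicator (fun _ => (1:ℝ)) (YW ω) * ρ ω) μ := by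
      refine ⟨(hgmeas.mul hρ).aestronglyMeasurable,
        HasFiniteIntegral.of_bounded (C := 1) (ae_of_all _ fun ω => ?_)⟩
      have h1 := hρ01 ω
      have h2 : |ρ ω| ≤ 1 := abs_le.2 ⟨by linarith [h1.1], h1.2⟩
      calc ‖A.indicator (fun _ => (1:ℝ)) (YW ω) * ρ ω‖
          = ‖A.indicator (fun _ => (1:ℝ)) (YW ω)‖ * |ρ ω| := by rw [norm_mul]; rfl
        _ ≤ 1 * 1 := mul_le_mul (hgbd ω) h2 (abs_nonneg _) zero_le_one
        _ = 1 := by ring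
    have hqgint : Integrable (fun ω => q ω * A.indicator (fun _ => (1:ℝ)) (YW ω)) μ := by
      refine ⟨(hqm.mul hgmeas).aestronglyMeasurable,
        HasFiniteIntegral.of_bounded (C := 1) ?_⟩
      filter_upwards [hq01] with ω hω
      have h2 : |q ω| ≤ 1 := abs_le.2 ⟨by linarith [hω.1], hω.2⟩
      calc ‖q ω * A.indicator (fun _ => (1:ℝ)) (YW ω)‖
          = |q ω| * ‖A.indicator (fun _ => (1:ℝ)) (YW ω)‖ := by rw [norm_mul]; rfl
        _ ≤ 1 * 1 := mul_le_mul h2 (hgbd ω) (norm_nonneg _) zero_le_one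
        _ = 1 := by ring
    have step1 : ∫ ω in V ⁻¹' B, A.indicator (fun _ => (1:ℝ)) (YW ω) * ρ ω ∂μ
        = ∫ ω in V ⁻¹' B, (μ[fun ω => A.indicator (fun _ => (1:ℝ)) (YW ω) * ρ ω | MeasurableSpace.comap V inferInstance]) ω ∂μ :=
      (setIntegral_condExp hm hρgint hBm).symm
    have step2 : ∫ ω in V ⁻¹' B, (μ[fun ω => A.indicator (fun _ => (1:ℝ)) (YW ω) * ρ ω | MeasurableSpace.comap V inferInstance]) ω ∂μ
        = ∫ ω in V ⁻¹' B, (μ[fun ω' => A.indicator (fun _ => (1:ℝ)) (YW ω') | MeasurableSpace.comap V inferInstance]) ω * q ω ∂μ := by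
      refine setIntegral_congr_ae (hm _ hBm) ?_
      filter_upwards [hCI A hA] with ω hω _
      exact hω
    have hmul : (fun ω => q ω * A.indicator (fun _ => (1:ℝ)) (YW ω)) =
        (fun ω => q ω) * (fun ω => A.indicator (fun _ => (1:ℝ)) (YW ω)) := rfl
    have step3 : μ[(fun ω => q ω) * (fun ω => A.indicator (fun _ => (1:ℝ)) (YW ω)) | MeasurableSpace.comap V inferInstance]
        =ᵐ[μ] (fun ω => q ω) * μ[fun ω => A.indicator (fun _ => (1:ℝ)) (YW ω) | MeasurableSpace.comap V inferInstance] :=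
      condExp_mul_of_stronglyMeasurable_left hq.stronglyMeasurable (hmul ▸ hqgint) hgint
    have step4 : ∫ ω in V ⁻¹' B, (μ[fun ω' => A.indicator (fun _ => (1:ℝ)) (YW ω') | MeasurableSpace.comap V inferInstance]) ω * q ω ∂μ
        = ∫ ω in V ⁻¹' B, q ω * A.indicator (fun _ => (1:ℝ)) (YW ω) ∂μ := by
      rw [← setIntegral_condExp hm hqgint hBm]
      refine setIntegral_congr_ae (hm _ hBm) ?_
      filter_upwards [step3] with ω hω _
      rw [mul_comm]
      have h5 : (μ[fun ω => q ω * A.indicator (fun _ => (1:ℝ)) (YW ω) | MeasurableSpace.comap V inferInstance]) ω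
          = (μ[(fun ω => q ω) * (fun ω => A.indicator (fun _ => (1:ℝ)) (YW ω)) | MeasurableSpace.comap V inferInstance]) ω := by
        rw [hmul]
      rw [h5, hω]
      rfl
    have hAm : MeasurableSet (YW ⁻¹' A) := hYW hA
    have hBfull : MeasurableSet (V ⁻¹' B) := hV hB
    have lhs_eq : ∫ ω in YW ⁻¹' A ∩ V ⁻¹' B, ρ ω ∂μ
        = ∫ ω in V ⁻¹' B, A.indicator (fun _ => (1:ℝ)) (YW ω) * ρ ω ∂μ := by
      rw [← Measure.restrict_restrict hAm, ← integral_indicator hAm]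
      refine setIntegral_congr_ae hBfull (ae_of_all _ fun ω _ => ?_)
      by_cases h : YW ω ∈ A
      · simp [Set.indicator_of_mem, h, Set.mem_preimage]
      · simp [Set.indicator_of_notMem, h, Set.mem_preimage]
    have rhs_eq : ∫ ω in YW ⁻¹' A ∩ V ⁻¹' B, q ω ∂μ
        = ∫ ω in V ⁻¹' B, q ω * A.indicator (fun _ => (1:ℝ)) (YW ω) ∂μ := by
      rw [← Measure.restrict_restrict hAm, ← integral_indicator hAm]
      refine setIntegral_congr_ae hBfull (ae_of_all _ fun ω _ => ?_)
      by_cases h : YW ω ∈ A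
      · simp [Set.indicator_of_mem, h, Set.mem_preimage]
      · simp [Set.indicator_of_notMem, h, Set.mem_preimage]
    rw [lhs_eq, rhs_eq, step1, step2, step4]
  -- integrability of ρ and q
  have int_ρ : Integrable ρ μ :=
    ⟨hρ.aestronglyMeasurable, HasFiniteIntegral.of_bounded (C := 1)
      (ae_of_all _ fun ω => abs_le.2 ⟨by linarith [(hρ01 ω).1], (hρ01 ω).2⟩)⟩
  have int_q : Integrable q μ := by
    refine ⟨hqm.aestronglyMeasurable, HasFiniteIntegral.of_bounded (C := 1) ?_⟩
    filter_upwards [hq01] with ω hω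
    exact abs_le.2 ⟨by linarith [hω.1], hω.2⟩
  -- the two density measures agree on rectangles
  have meas_eq : ∀ (A : Set (ℝ × ℝ)) (B : Set ℝ), MeasurableSet A → MeasurableSet B →
      μ.withDensity (fun ω => ENNReal.ofReal (ρ ω)) (YW ⁻¹' A ∩ V ⁻¹' B)
        = μ.withDensity (fun ω => ENNReal.ofReal (q ω)) (YW ⁻¹' A ∩ V ⁻¹' B) := by
    intro A B hA hB
    have hsmeas : MeasurableSet (YW ⁻¹' A ∩ V ⁻¹' B) := (hYW hA).inter (hV hB)
    rw [withDensity_apply _ hsmeas, withDensity_apply _ hsmeas,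
      ← ofReal_integral_eq_lintegral_ofReal int_ρ.restrict
        (ae_restrict_of_ae (ae_of_all _ fun ω => (hρ01 ω).1)),
      ← ofReal_integral_eq_lintegral_ofReal int_q.restrict
        (ae_restrict_of_ae (hq01.mono fun ω hω => hω.1)),
      key A B hA hB]
  -- finiteness of the density measures
  have hfin : ∀ (g : Ω → ℝ), Measurable g → (∀ᵐ ω ∂μ, 0 ≤ g ω ∧ g ω ≤ 1) →
      IsFiniteMeasure (μ.withDensity (fun ω => ENNReal.ofReal (g ω))) := by
    intro g hg hg01
    constructor
    rw [withDensity_apply _ MeasurableSet.univ]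
    calc ∫⁻ ω in Set.univ, ENNReal.ofReal (g ω) ∂μ
        ≤ ∫⁻ _ω in Set.univ, 1 ∂μ := by
          refine lintegral_mono_ae ?_
          filter_upwards [ae_restrict_of_ae hg01] with ω hω
          exact ENNReal.ofReal_le_one.2 hω.2
      _ = μ Set.univ := by simp
      _ < ⊤ := measure_lt_top μ _
  haveI i1 : IsFiniteMeasure (μ.withDensity (fun ω => ENNReal.ofReal (ρ ω))) :=
    hfin ρ hρ (ae_of_all _ hρ01)
  haveI i2 : IsFiniteMeasure (μ.withDensity (fun ω => ENNReal.ofReal (q ω))) :=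
    hfin q hqm hq01
  -- equality of trimmed measures on comap T
  have hgen : MeasurableSpace.comap (fun ω => (YW ω, V ω)) inferInstance
      = MeasurableSpace.generateFrom
          (Set.image (fun S => (fun ω => (YW ω, V ω)) ⁻¹' S) (Set.image2 (· ×ˢ ·)
            {s : Set (ℝ × ℝ) | MeasurableSet s} {t : Set ℝ | MeasurableSet t})) := by
    conv_lhs => rw [show (inferInstance : MeasurableSpace ((ℝ × ℝ) × ℝ)) =
      MeasurableSpace.generateFrom (Set.image2 (· ×ˢ ·)
        {s : Set (ℝ × ℝ) | MeasurableSet s} {t : Set ℝ | MeasurableSet t}) from generateFrom_prod.symm]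
    exact MeasurableSpace.comap_generateFrom
  have htrim : (μ.withDensity (fun ω => ENNReal.ofReal (ρ ω))).trim hm'
      = (μ.withDensity (fun ω => ENNReal.ofReal (q ω))).trim hm' := by
    refine MeasureTheory.ext_of_generate_finite _ hgen ?_ ?_ ?_
    · have := (isPiSystem_prod (α := ℝ × ℝ) (β := ℝ)).comap (fun ω => (YW ω, V ω))
      convert this using 1
      rfl
    · rintro S ⟨AB, ⟨A, hA, B, hB, rfl⟩, rfl⟩
      replace hA : MeasurableSet A := hA
      replace hB : MeasurableSet B := hB
      have hpre : (fun ω => (YW ω, V ω)) ⁻¹' (A ×ˢ B) = YW ⁻¹' A ∩ V ⁻¹' B :=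
        Set.mk_preimage_prod YW V
      have hSm' : MeasurableSet[MeasurableSpace.comap (fun ω => (YW ω, V ω)) inferInstance]
          ((fun ω => (YW ω, V ω)) ⁻¹' (A ×ˢ B)) := ⟨A ×ˢ B, hA.prod hB, rfl⟩
      rw [trim_measurableSet_eq hm' hSm', trim_measurableSet_eq hm' hSm', hpre]
      exact meas_eq A B hA hB
    · have hu : MeasurableSet[MeasurableSpace.comap (fun ω => (YW ω, V ω)) inferInstance]
          (Set.univ : Set Ω) := MeasurableSet.univ
      rw [trim_measurableSet_eq hm' hu, trim_measurableSet_eq hm' hu]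
      have : (Set.univ : Set Ω) = YW ⁻¹' Set.univ ∩ V ⁻¹' Set.univ := by simp
      rw [this]
      exact meas_eq _ _ MeasurableSet.univ MeasurableSet.univ
  -- identify the integrals
  have hρint_eq : ∫ ω, ρ ω * F ω ∂μ
      = ∫ ω, F ω ∂(μ.withDensity (fun ω => ENNReal.ofReal (ρ ω))) := by
    have hnn : Measurable (fun ω => (ρ ω).toNNReal) := hρ.real_toNNReal
    have : μ.withDensity (fun ω => ENNReal.ofReal (ρ ω))
        = μ.withDensity (fun ω => ((ρ ω).toNNReal : ℝ≥0∞)) := rfl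
    rw [this, integral_withDensity_eq_integral_smul hnn]
    refine integral_congr_ae (ae_of_all _ fun ω => ?_)
    simp [NNReal.smul_def, Real.coe_toNNReal _ (hρ01 ω).1]
  have hqint_eq : ∫ ω, q ω * F ω ∂μ
      = ∫ ω, F ω ∂(μ.withDensity (fun ω => ENNReal.ofReal (q ω))) := by
    have hnn : Measurable (fun ω => (q ω).toNNReal) := hqm.real_toNNReal
    have : μ.withDensity (fun ω => ENNReal.ofReal (q ω))
        = μ.withDensity (fun ω => ((q ω).toNNReal : ℝ≥0∞)) := rfl
    rw [this, integral_withDensity_eq_integral_smul hnn]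
    refine integral_congr_ae ?_
    filter_upwards [hq01] with ω hω
    simp [NNReal.smul_def, Real.coe_toNNReal _ hω.1]
  have hFsm : StronglyMeasurable[MeasurableSpace.comap (fun ω => (YW ω, V ω)) inferInstance] F :=
    hF.stronglyMeasurable
  rw [hρint_eq, hqint_eq, integral_trim hm' hFsm, integral_trim hm' hFsm, htrim]


/-- Core population identity for consistency (Theorem 1):
if `(Y,W) ⟂ R | σ(V)`, `π(V)` is a bounded version of `E[R | σ(V)]`, and
`E[u(Y,V)] = E[s(W,V)]`, then
`E[R·u(Y,V)/π(V) - (1-R)·s(W,V)/(1-π(V))] = 0`. -/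
theorem stmt_6 {Ω : Type*} [MeasurableSpace Ω] (μ : Measure Ω) [IsProbabilityMeasure μ]
    (R Y W V : Ω → ℝ) (hR : Measurable R) (hY : Measurable Y)
    (hW : Measurable W) (hV : Measurable V)
    (hR01 : ∀ ω, R ω = 0 ∨ R ω = 1)
    (πV : Ω → ℝ)
    (hπmeas : Measurable[MeasurableSpace.comap V inferInstance] πV)
    (hπver : πV =ᵐ[μ] μ[R | MeasurableSpace.comap V inferInstance])
    (δ : ℝ) (hδ : δ ∈ Set.Ioo (0 : ℝ) 1)
    (hπbound : ∀ᵐ ω ∂μ, δ ≤ πV ω ∧ πV ω ≤ 1 - δ)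
    (hCI : CondIndepGiven μ (MeasurableSpace.comap V inferInstance)
      (fun ω => (Y ω, W ω)) R)
    (u s : ℝ × ℝ → ℝ) (hu : Measurable u) (hs : Measurable s)
    (huint : Integrable (fun ω => u (Y ω, V ω)) μ)
    (hsint : Integrable (fun ω => s (W ω, V ω)) μ)
    (hmoment : ∫ ω, u (Y ω, V ω) ∂μ = ∫ ω, s (W ω, V ω) ∂μ) :
    ∫ ω, (R ω * u (Y ω, V ω) / πV ω - (1 - R ω) * s (W ω, V ω) / (1 - πV ω)) ∂μ = 0 := by
  obtain ⟨hδ0, hδ1⟩ := hδ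
  have hm : MeasurableSpace.comap V inferInstance ≤ ‹MeasurableSpace Ω› := hV.comap_le
  have hπVfull : Measurable πV := hπmeas.mono hm le_rfl
  have hYW : Measurable (fun ω => (Y ω, W ω)) := hY.prodMk hW
  -- boundedness / integrability helper
  have bint : ∀ f : Ω → ℝ, Measurable f → (∀ ω, ‖f ω‖ ≤ 1) → Integrable f μ := fun f hf hbd =>
    ⟨hf.aestronglyMeasurable, HasFiniteIntegral.of_bounded (C := 1) (ae_of_all _ hbd)⟩
  have hindbd : ∀ (A : Set (ℝ × ℝ)) ω, ‖A.indicator (fun _ => (1:ℝ)) ((Y ω), (W ω))‖ ≤ 1 := by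
    intro A ω
    by_cases h : (Y ω, W ω) ∈ A <;>
      simp [Set.indicator_of_mem, Set.indicator_of_notMem, h]
  -- identify the R-indicator with R itself
  have hRind : (fun ω => ({(1:ℝ)} : Set ℝ).indicator (fun _ => (1:ℝ)) (R ω)) = R := by
    funext ω
    rcases hR01 ω with h | h <;> rw [h] <;> simp
  -- conditional-independence identity in multiplicative form, for R
  have hCI_R : ∀ A : Set (ℝ × ℝ), MeasurableSet A →
      μ[fun ω => A.indicator (fun _ => (1:ℝ)) (Y ω, W ω) * R ω | MeasurableSpace.comap V inferInstance] =ᵐ[μ]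
      fun ω => (μ[fun ω' => A.indicator (fun _ => (1:ℝ)) (Y ω', W ω') | MeasurableSpace.comap V inferInstance]) ω * πV ω := by
    intro A hA
    have h := hCI A {(1:ℝ)} hA (measurableSet_singleton 1)
    have hfun : (fun ω => A.indicator (fun _ => (1:ℝ)) (Y ω, W ω) *
        ({(1:ℝ)} : Set ℝ).indicator (fun _ => (1:ℝ)) (R ω))
        = fun ω => A.indicator (fun _ => (1:ℝ)) (Y ω, W ω) * R ω := by
      funext ω
      rcases hR01 ω with hh | hh <;> rw [hh] <;> simp
    rw [hfun] at h
    have hcongr : μ[fun ω' => ({(1:ℝ)} : Set ℝ).indicator (fun _ => (1:ℝ)) (R ω') | MeasurableSpace.comap V inferInstance]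
        = μ[R | MeasurableSpace.comap V inferInstance] := by rw [hRind]
    rw [hcongr] at h
    filter_upwards [h, hπver] with ω h1 h2
    rw [h1, ← h2]
  -- and for 1 - R
  have hCI_R' : ∀ A : Set (ℝ × ℝ), MeasurableSet A →
      μ[fun ω => A.indicator (fun _ => (1:ℝ)) (Y ω, W ω) * (1 - R ω) | MeasurableSpace.comap V inferInstance] =ᵐ[μ]
      fun ω => (μ[fun ω' => A.indicator (fun _ => (1:ℝ)) (Y ω', W ω') | MeasurableSpace.comap V inferInstance]) ω * (1 - πV ω) := by
    intro A hA
    have hgmeas : Measurable (fun ω => A.indicator (fun _ => (1:ℝ)) (Y ω, W ω)) :=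
      (measurable_const.indicator hA).comp hYW
    have hgint : Integrable (fun ω => A.indicator (fun _ => (1:ℝ)) (Y ω, W ω)) μ :=
      bint _ hgmeas (hindbd A)
    have hgRmeas : Measurable (fun ω => A.indicator (fun _ => (1:ℝ)) (Y ω, W ω) * R ω) :=
      hgmeas.mul hR
    have hgRint : Integrable (fun ω => A.indicator (fun _ => (1:ℝ)) (Y ω, W ω) * R ω) μ := by
      refine bint _ hgRmeas fun ω => ?_
      have h1 : |R ω| ≤ 1 := by rcases hR01 ω with h | h <;> rw [h] <;> norm_num
      calc ‖A.indicator (fun _ => (1:ℝ)) (Y ω, W ω) * R ω‖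
          = ‖A.indicator (fun _ => (1:ℝ)) (Y ω, W ω)‖ * |R ω| := by rw [norm_mul]; rfl
        _ ≤ 1 * 1 := mul_le_mul (hindbd A ω) h1 (abs_nonneg _) zero_le_one
        _ = 1 := by ring
    have hsub : (fun ω => A.indicator (fun _ => (1:ℝ)) (Y ω, W ω) * (1 - R ω))
        = (fun ω => A.indicator (fun _ => (1:ℝ)) (Y ω, W ω))
          - (fun ω => A.indicator (fun _ => (1:ℝ)) (Y ω, W ω) * R ω) := by
      funext ω; simp [Pi.sub_apply]; ring
    rw [hsub]
    have h1 := condExp_sub (m := MeasurableSpace.comap V inferInstance) hgint hgRint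
    filter_upwards [h1, hCI_R A hA] with ω h2 h3
    rw [Pi.sub_apply] at h2
    rw [h2, h3]
    ring
  -- apply the key lemma, first term
  have hTm : Measurable[MeasurableSpace.comap (fun ω => ((Y ω, W ω), V ω)) inferInstance]
      (fun ω => ((Y ω, W ω), V ω)) := measurable_iff_comap_le.mpr le_rfl
  have hYm' : Measurable[MeasurableSpace.comap (fun ω => ((Y ω, W ω), V ω)) inferInstance] Y :=
    (measurable_fst.comp measurable_fst).comp hTm
  have hWm' : Measurable[MeasurableSpace.comap (fun ω => ((Y ω, W ω), V ω)) inferInstance] W :=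
    (measurable_snd.comp measurable_fst).comp hTm
  have hVm' : Measurable[MeasurableSpace.comap (fun ω => ((Y ω, W ω), V ω)) inferInstance] V :=
    measurable_snd.comp hTm
  have hle : MeasurableSpace.comap V inferInstance
      ≤ MeasurableSpace.comap (fun ω => ((Y ω, W ω), V ω)) inferInstance :=
    measurable_iff_comap_le.mp hVm'
  have hπm' : Measurable[MeasurableSpace.comap (fun ω => ((Y ω, W ω), V ω)) inferInstance] πV :=
    hπmeas.mono hle le_rfl
  have eq1 : ∫ ω, R ω * (u (Y ω, V ω) / πV ω) ∂μ = ∫ ω, πV ω * (u (Y ω, V ω) / πV ω) ∂μ := by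
    refine ipw_key μ (fun ω => (Y ω, W ω)) V hYW hV R πV hR
      (fun ω => by rcases hR01 ω with h | h <;> rw [h] <;> norm_num)
      hπmeas ?_ hCI_R (fun ω => u (Y ω, V ω) / πV ω)
      ((hu.comp (hYm'.prodMk hVm')).div hπm')
    filter_upwards [hπbound] with ω hω
    exact ⟨le_trans (le_of_lt hδ0) hω.1, by linarith [hω.2]⟩
  have eq2 : ∫ ω, (1 - R ω) * (s (W ω, V ω) / (1 - πV ω)) ∂μ
      = ∫ ω, (1 - πV ω) * (s (W ω, V ω) / (1 - πV ω)) ∂μ := by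
    refine ipw_key μ (fun ω => (Y ω, W ω)) V hYW hV (fun ω => 1 - R ω) (fun ω => 1 - πV ω)
      (measurable_const.sub hR)
      (fun ω => by rcases hR01 ω with h | h <;> simp [h])
      (measurable_const.sub hπmeas) ?_ hCI_R' (fun ω => s (W ω, V ω) / (1 - πV ω))
      ((hs.comp (hWm'.prodMk hVm')).div (measurable_const.sub hπm'))
    filter_upwards [hπbound] with ω hω
    constructor <;> [linarith [hω.2]; linarith [hω.1, hδ0]]
  -- simplify right-hand sides
  have eq1' : ∫ ω, πV ω * (u (Y ω, V ω) / πV ω) ∂μ = ∫ ω, u (Y ω, V ω) ∂μ := by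
    refine integral_congr_ae ?_
    filter_upwards [hπbound] with ω hω
    have hne : πV ω ≠ 0 := by linarith [hω.1]
    field_simp
  have eq2' : ∫ ω, (1 - πV ω) * (s (W ω, V ω) / (1 - πV ω)) ∂μ = ∫ ω, s (W ω, V ω) ∂μ := by
    refine integral_congr_ae ?_
    filter_upwards [hπbound] with ω hω
    have hne : 1 - πV ω ≠ 0 := by linarith [hω.2]
    field_simp
  -- integrability of both terms
  have habsR : ∀ ω, |R ω| ≤ 1 := fun ω => by rcases hR01 ω with h | h <;> rw [h] <;> norm_num
  have int1 : Integrable (fun ω => R ω * u (Y ω, V ω) / πV ω) μ := by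
    refine Integrable.mono' (huint.norm.const_mul δ⁻¹)
      ((hR.mul (hu.comp (hY.prodMk hV))).div hπVfull).aestronglyMeasurable ?_
    filter_upwards [hπbound] with ω hω
    have hπpos : (0:ℝ) < πV ω := lt_of_lt_of_le hδ0 hω.1
    rw [norm_div, norm_mul]
    calc ‖R ω‖ * ‖u (Y ω, V ω)‖ / ‖πV ω‖
        ≤ 1 * ‖u (Y ω, V ω)‖ / δ := by
          apply div_le_div₀ (by positivity)
            (mul_le_mul (habsR ω) le_rfl (norm_nonneg _) zero_le_one) hδ0
          rw [Real.norm_eq_abs, abs_of_pos hπpos]; exact hω.1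
      _ = δ⁻¹ * ‖u (Y ω, V ω)‖ := by rw [one_mul, div_eq_inv_mul]
  have int2 : Integrable (fun ω => (1 - R ω) * s (W ω, V ω) / (1 - πV ω)) μ := by
    refine Integrable.mono' (hsint.norm.const_mul δ⁻¹)
      (((measurable_const.sub hR).mul (hs.comp (hW.prodMk hV))).div
        (measurable_const.sub hπVfull)).aestronglyMeasurable ?_
    filter_upwards [hπbound] with ω hω
    have hπpos : (0:ℝ) < 1 - πV ω := by linarith [hω.2]
    have habsR' : |1 - R ω| ≤ 1 := by rcases hR01 ω with h | h <;> rw [h] <;> norm_num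
    rw [norm_div, norm_mul]
    calc ‖1 - R ω‖ * ‖s (W ω, V ω)‖ / ‖1 - πV ω‖
        ≤ 1 * ‖s (W ω, V ω)‖ / δ := by
          apply div_le_div₀ (by positivity)
            (mul_le_mul habsR' le_rfl (norm_nonneg _) zero_le_one) hδ0
          rw [Real.norm_eq_abs, abs_of_pos hπpos]; linarith [hω.2]
      _ = δ⁻¹ * ‖s (W ω, V ω)‖ := by rw [one_mul, div_eq_inv_mul]
  rw [integral_sub int1 int2]
  have e1 : ∫ ω, R ω * u (Y ω, V ω) / πV ω ∂μ = ∫ ω, u (Y ω, V ω) ∂μ := by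
    rw [show (fun ω => R ω * u (Y ω, V ω) / πV ω) = fun ω => R ω * (u (Y ω, V ω) / πV ω) from
      funext fun ω => mul_div_assoc _ _ _, eq1, eq1']
  have e2 : ∫ ω, (1 - R ω) * s (W ω, V ω) / (1 - πV ω) ∂μ = ∫ ω, s (W ω, V ω) ∂μ := by
    rw [show (fun ω => (1 - R ω) * s (W ω, V ω) / (1 - πV ω))
        = fun ω => (1 - R ω) * (s (W ω, V ω) / (1 - πV ω)) from
      funext fun ω => mul_div_assoc _ _ _, eq2, eq2']
  rw [e1, e2, hmoment, sub_self]
end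

section
/- Let R, Y, W, V be random variables on a probability space (Ω, ℱ, P) with R taking values in {0,1}, Y integrable, and suppose (Y,W) is conditionally independent of R given σ(V). Let m(W,V) be a σ(W,V)-measurable version of E[Y | σ(W,V)] and let ȳ(V) be a σ(V)-measurable version of E[Y | σ(V)], and assume m(W,V) is integrable. Then for every bounded measurable function t of V, E[ t(V) · ( R·(Y − ȳ(V)) + (1 − R)·(ȳ(V) − m(W,V)) ) ] = 0. -/
open MeasureTheory Set Function

section Helpers

variable {Ω : Type*} {mΩ : MeasurableSpace Ω} {μ : Measure Ω} [IsProbabilityMeasure μ]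

/-- Pull-out property at the level of integrals. -/
lemma integral_mul_eq_integral_mul_condexp {m : MeasurableSpace Ω} (hm : m ≤ mΩ)
    {φ f : Ω → ℝ} (hφ : StronglyMeasurable[m] φ)
    (hint : Integrable (fun ω => φ ω * f ω) μ) (hf : Integrable f μ) :
    ∫ ω, φ ω * f ω ∂μ = ∫ ω, φ ω * (μ[f|m]) ω ∂μ := by
  have h1 : μ[φ * f|m] =ᵐ[μ] φ * μ[f|m] :=
    condExp_mul_of_stronglyMeasurable_left hφ (by exact hint) hf
  calc ∫ ω, φ ω * f ω ∂μ = ∫ ω, (μ[fun ω => φ ω * f ω|m]) ω ∂μ :=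
        (integral_condExp hm).symm
    _ = ∫ ω, φ ω * (μ[f|m]) ω ∂μ := integral_congr_ae (by exact h1)

/-- Extension from indicators of `m'`-measurable sets to `m'`-measurable integrable
functions, for identities of the form `∫ φ·f = ∫ ψ·f`. -/
lemma integral_mul_eq_of_forall_indicator {m' : MeasurableSpace Ω} (hm' : m' ≤ mΩ)
    {φ ψ : Ω → ℝ} (hφm : AEStronglyMeasurable[mΩ] φ μ) (hψm : AEStronglyMeasurable[mΩ] ψ μ)
    {C : ℝ} (hφb : ∀ᵐ ω ∂μ, ‖φ ω‖ ≤ C) (hψb : ∀ᵐ ω ∂μ, ‖ψ ω‖ ≤ C)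
    (hbase : ∀ S : Set Ω, MeasurableSet[m'] S →
      ∫ ω, φ ω * S.indicator (fun _ => (1:ℝ)) ω ∂μ
        = ∫ ω, ψ ω * S.indicator (fun _ => (1:ℝ)) ω ∂μ)
    {f : Ω → ℝ} (hfm : StronglyMeasurable[m'] f) (hfi : Integrable f μ) :
    ∫ ω, φ ω * f ω ∂μ = ∫ ω, ψ ω * f ω ∂μ := by
  have key : ∀ ⦃g : Ω → ℝ⦄, Integrable g (μ.trim hm') →
      ∫ ω, φ ω * g ω ∂μ = ∫ ω, ψ ω * g ω ∂μ := by
    refine @Integrable.induction Ω ℝ m' _ (μ.trim hm')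
      (fun g => ∫ ω, φ ω * g ω ∂μ = ∫ ω, ψ ω * g ω ∂μ) ?_ ?_ ?_ ?_
    · -- indicators
      intro c S hS _
      have hrep : ∀ ω, S.indicator (fun _ => c) ω = c * S.indicator (fun _ => (1:ℝ)) ω := by
        intro ω; by_cases h : ω ∈ S <;> simp [h]
      simp_rw [hrep, mul_left_comm _ c, integral_const_mul]
      rw [hbase S hS]
    · -- additivity
      intro g₁ g₂ _ hg₁ hg₂ h₁ h₂
      have hg₁μ : Integrable g₁ μ := integrable_of_integrable_trim hm' hg₁
      have hg₂μ : Integrable g₂ μ := integrable_of_integrable_trim hm' hg₂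
      have i₁ : Integrable (fun ω => φ ω * g₁ ω) μ := hg₁μ.bdd_mul hφm hφb
      have i₂ : Integrable (fun ω => φ ω * g₂ ω) μ := hg₂μ.bdd_mul hφm hφb
      have j₁ : Integrable (fun ω => ψ ω * g₁ ω) μ := hg₁μ.bdd_mul hψm hψb
      have j₂ : Integrable (fun ω => ψ ω * g₂ ω) μ := hg₂μ.bdd_mul hψm hψb
      have l1 : (fun ω => φ ω * (g₁ + g₂) ω) = fun ω => φ ω * g₁ ω + φ ω * g₂ ω := by
        funext ω; simp [mul_add]
      have l2 : (fun ω => ψ ω * (g₁ + g₂) ω) = fun ω => ψ ω * g₁ ω + ψ ω * g₂ ω := by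
        funext ω; simp [mul_add]
      rw [l1, l2, integral_add i₁ i₂, integral_add j₁ j₂, h₁, h₂]
    · -- closedness in L¹
      have hC : (0:ℝ) ≤ C := by
        have hne : (ae μ).NeBot := ae_neBot.mpr (IsProbabilityMeasure.ne_zero μ)
        obtain ⟨ω, hω⟩ := hφb.exists
        exact le_trans (norm_nonneg _) hω
      have hcont : ∀ (χ : Ω → ℝ), AEStronglyMeasurable[mΩ] χ μ → (∀ᵐ ω ∂μ, ‖χ ω‖ ≤ C) →
          Continuous (fun g : Lp ℝ 1 (μ.trim hm') => ∫ ω, χ ω * (g : Ω → ℝ) ω ∂μ) := by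
        intro χ hχm hχb
        refine (LipschitzWith.of_dist_le_mul (K := ⟨C, hC⟩) ?_).continuous
        intro g₁ g₂
        have hg₁μ : Integrable (g₁ : Ω → ℝ) μ :=
          integrable_of_integrable_trim hm' (L1.integrable_coeFn g₁)
        have hg₂μ : Integrable (g₂ : Ω → ℝ) μ :=
          integrable_of_integrable_trim hm' (L1.integrable_coeFn g₂)
        have i₁ : Integrable (fun ω => χ ω * (g₁ : Ω → ℝ) ω) μ := hg₁μ.bdd_mul hχm hχb
        have i₂ : Integrable (fun ω => χ ω * (g₂ : Ω → ℝ) ω) μ := hg₂μ.bdd_mul hχm hχb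
        rw [Real.dist_eq, ← Real.norm_eq_abs, ← integral_sub i₁ i₂]
        have e1 : (fun ω => χ ω * (g₁ : Ω → ℝ) ω - χ ω * (g₂ : Ω → ℝ) ω)
            = fun ω => χ ω * ((g₁ : Ω → ℝ) ω - (g₂ : Ω → ℝ) ω) := by
          funext ω; ring
        rw [e1]
        have hni : Integrable (fun ω => ‖(g₁ : Ω → ℝ) ω - (g₂ : Ω → ℝ) ω‖) μ :=
          (hg₁μ.sub hg₂μ).norm
        have step1 : ‖∫ ω, χ ω * ((g₁ : Ω → ℝ) ω - (g₂ : Ω → ℝ) ω) ∂μ‖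
            ≤ ∫ ω, ‖χ ω * ((g₁ : Ω → ℝ) ω - (g₂ : Ω → ℝ) ω)‖ ∂μ :=
          norm_integral_le_integral_norm _
        have step2 : ∫ ω, ‖χ ω * ((g₁ : Ω → ℝ) ω - (g₂ : Ω → ℝ) ω)‖ ∂μ
            ≤ ∫ ω, C * ‖(g₁ : Ω → ℝ) ω - (g₂ : Ω → ℝ) ω‖ ∂μ := by
          refine integral_mono_ae (by exact ((hg₁μ.sub hg₂μ).bdd_mul hχm hχb).norm)
            (hni.const_mul C) ?_
          filter_upwards [hχb] with ω hω
          rw [norm_mul]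
          exact mul_le_mul_of_nonneg_right hω (norm_nonneg _)
        have step3 : ∫ ω, ‖(g₁ : Ω → ℝ) ω - (g₂ : Ω → ℝ) ω‖ ∂μ = dist g₁ g₂ := by
          rw [L1.dist_eq_integral_dist]
          have hms : AEStronglyMeasurable (fun ω => ‖(g₁ : Ω → ℝ) ω - (g₂ : Ω → ℝ) ω‖)
              (μ.trim hm') :=
            ((Lp.aestronglyMeasurable g₁).sub (Lp.aestronglyMeasurable g₂)).norm
          rw [integral_trim_ae hm' hms]
          exact integral_congr_ae (by
            filter_upwards with ω
            exact (dist_eq_norm _ _).symm)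
        calc ‖∫ ω, χ ω * ((g₁ : Ω → ℝ) ω - (g₂ : Ω → ℝ) ω) ∂μ‖
            ≤ ∫ ω, C * ‖(g₁ : Ω → ℝ) ω - (g₂ : Ω → ℝ) ω‖ ∂μ := le_trans step1 step2
          _ = C * ∫ ω, ‖(g₁ : Ω → ℝ) ω - (g₂ : Ω → ℝ) ω‖ ∂μ := integral_const_mul _ _
          _ = (⟨C, hC⟩ : NNReal) * dist g₁ g₂ := by rw [step3]
      exact isClosed_eq (hcont φ hφm hφb) (hcont ψ hψm hψb)
    · -- a.e. congruence
      intro g₁ g₂ hg hgi h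
      have hgμ : g₁ =ᵐ[μ] g₂ := ae_eq_of_ae_eq_trim hg
      have e1 : ∫ ω, φ ω * g₂ ω ∂μ = ∫ ω, φ ω * g₁ ω ∂μ :=
        integral_congr_ae (by filter_upwards [hgμ] with ω hω; rw [hω])
      have e2 : ∫ ω, ψ ω * g₂ ω ∂μ = ∫ ω, ψ ω * g₁ ω ∂μ :=
        integral_congr_ae (by filter_upwards [hgμ] with ω hω; rw [hω])
      rw [e1, e2, h]
  exact key (hfi.trim hm' hfm)

lemma indicator_preimage_apply {γ : Type*} (g : Ω → γ) (A : Set γ) (ω : Ω) :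
    (g ⁻¹' A).indicator (fun _ => (1:ℝ)) ω = A.indicator (fun _ => (1:ℝ)) (g ω) := by
  by_cases h : g ω ∈ A <;> simp [h]

end Helpers


/-- Population version of the estimating equation (2) at the true parameter:
if `(Y,W) ⟂ R | σ(V)`, `m(W,V)` is a `σ(W,V)`-measurable version of `E[Y | σ(W,V)]`,
and `ȳ(V)` is a `σ(V)`-measurable version of `E[Y | σ(V)]`, then for every bounded
measurable `t`, `E[t(V)·(R·(Y - ȳ(V)) + (1-R)·(ȳ(V) - m(W,V)))] = 0`. -/
theorem stmt_7 {Ω : Type*} [MeasurableSpace Ω] (μ : Measure Ω) [IsProbabilityMeasure μ]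
    (R Y W V : Ω → ℝ) (hR : Measurable R) (hY : Measurable Y)
    (hW : Measurable W) (hV : Measurable V)
    (hR01 : ∀ ω, R ω = 0 ∨ R ω = 1)
    (hYint : Integrable Y μ)
    (hCI : CondIndepGiven μ (MeasurableSpace.comap V inferInstance)
      (fun ω => (Y ω, W ω)) R)
    (mWV : Ω → ℝ)
    (hmWVmeas :
      Measurable[MeasurableSpace.comap (fun ω => (W ω, V ω)) inferInstance] mWV)
    (hmWVver : mWV =ᵐ[μ]
      μ[Y | MeasurableSpace.comap (fun ω => (W ω, V ω)) inferInstance])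
    (hmWVint : Integrable mWV μ)
    (yV : Ω → ℝ)
    (hyVmeas : Measurable[MeasurableSpace.comap V inferInstance] yV)
    (hyVver : yV =ᵐ[μ] μ[Y | MeasurableSpace.comap V inferInstance])
    (t : ℝ → ℝ) (ht : Measurable t) (htb : ∃ C, ∀ x, |t x| ≤ C) :
    ∫ ω, t (V ω) * (R ω * (Y ω - yV ω) + (1 - R ω) * (yV ω - mWV ω)) ∂μ = 0 := by

  classical
  obtain ⟨C, hC⟩ := htb
  have hCn : ∀ x, ‖t x‖ ≤ C := fun x => by simpa using hC x
  have hC0 : (0:ℝ) ≤ C := le_trans (abs_nonneg _) (hC 0)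
  -- measurability of the maps w.r.t. their comap σ-algebras
  have hVmeas : Measurable[MeasurableSpace.comap V inferInstance] V := fun s hs => ⟨s, hs, rfl⟩
  have hWVmeas : Measurable[MeasurableSpace.comap (fun ω => (W ω, V ω)) inferInstance]
      (fun ω => (W ω, V ω)) := fun s hs => ⟨s, hs, rfl⟩
  have hYWmeas : Measurable[MeasurableSpace.comap (fun ω => (Y ω, W ω)) inferInstance]
      (fun ω => (Y ω, W ω)) := fun s hs => ⟨s, hs, rfl⟩
  have hVle : MeasurableSpace.comap V inferInstance ≤ ‹MeasurableSpace Ω› := hV.comap_le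
  have hWVle : MeasurableSpace.comap (fun ω => (W ω, V ω)) inferInstance
      ≤ ‹MeasurableSpace Ω› := (hW.prodMk hV).comap_le
  have hYWle : MeasurableSpace.comap (fun ω => (Y ω, W ω)) inferInstance
      ≤ ‹MeasurableSpace Ω› := (hY.prodMk hW).comap_le
  have hVleWV : MeasurableSpace.comap V inferInstance
      ≤ MeasurableSpace.comap (fun ω => (W ω, V ω)) inferInstance := by
    rintro S ⟨A, hA, rfl⟩
    exact ⟨Set.univ ×ˢ A, MeasurableSet.univ.prod hA, by ext ω; simp⟩
  -- the conditional probability e = E[R | σ(V)]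
  set e : Ω → ℝ := μ[R | MeasurableSpace.comap V inferInstance] with he_def
  have hRb : ∀ᵐ ω ∂μ, ‖R ω‖ ≤ 1 :=
    ae_of_all _ (fun ω => by rcases hR01 ω with h | h <;> simp [h])
  have hRint : Integrable R μ :=
    Integrable.mono' (integrable_const 1) hR.aestronglyMeasurable hRb
  have hesm : StronglyMeasurable[MeasurableSpace.comap V inferInstance] e :=
    stronglyMeasurable_condExp
  have heb : ∀ᵐ ω ∂μ, ‖e ω‖ ≤ 1 := by
    have h0 : 0 ≤ᵐ[μ] e :=
      condExp_nonneg (ae_of_all _ fun ω => by rcases hR01 ω with h | h <;> simp [h])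
    have h1 : e ≤ᵐ[μ] μ[(fun _ => (1:ℝ)) | MeasurableSpace.comap V inferInstance] :=
      condExp_mono hRint (integrable_const 1)
        (ae_of_all _ fun ω => by rcases hR01 ω with h | h <;> simp [h])
    rw [condExp_const hVle] at h1
    filter_upwards [h0, h1] with ω h0ω h1ω
    have h0' : (0:ℝ) ≤ e ω := h0ω
    have h1' : e ω ≤ 1 := h1ω
    rw [Real.norm_eq_abs, abs_le]
    constructor <;> linarith
  have heint : Integrable e μ := integrable_condExp
  have htV : StronglyMeasurable[MeasurableSpace.comap V inferInstance] (fun ω => t (V ω)) :=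
    (ht.comp hVmeas).stronglyMeasurable
  have htVmeas : AEStronglyMeasurable (fun ω => t (V ω)) μ :=
    ((ht.comp hV)).aestronglyMeasurable
  have htVb : ∀ᵐ ω ∂μ, ‖t (V ω)‖ ≤ C := ae_of_all _ fun ω => hCn _
  have htVR_meas : AEStronglyMeasurable (fun ω => t (V ω) * R ω) μ :=
    ((ht.comp hV).mul hR).aestronglyMeasurable
  have htVR_b : ∀ᵐ ω ∂μ, ‖t (V ω) * R ω‖ ≤ C := by
    filter_upwards [hRb] with ω hω
    rw [norm_mul]
    calc ‖t (V ω)‖ * ‖R ω‖ ≤ C * 1 :=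
          mul_le_mul (hCn _) hω (norm_nonneg _) hC0
      _ = C := mul_one C
  have htVe_meas : AEStronglyMeasurable (fun ω => t (V ω) * e ω) μ :=
    ((ht.comp hV)).aestronglyMeasurable.mul (hesm.mono hVle).aestronglyMeasurable
  have htVe_b : ∀ᵐ ω ∂μ, ‖t (V ω) * e ω‖ ≤ C := by
    filter_upwards [heb] with ω hω
    rw [norm_mul]
    calc ‖t (V ω)‖ * ‖e ω‖ ≤ C * 1 :=
          mul_le_mul (hCn _) hω (norm_nonneg _) hC0
      _ = C := mul_one C
  have hbdd_int : ∀ (g : Ω → ℝ), AEStronglyMeasurable g μ → (∀ᵐ ω ∂μ, ‖g ω‖ ≤ C) →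
      Integrable g μ := fun g h1 h2 => Integrable.mono' (integrable_const C) h1 h2
  have htVRint : Integrable (fun ω => t (V ω) * R ω) μ := hbdd_int _ htVR_meas htVR_b
  -- base case over σ(Y, W), from conditional independence
  have baseYW : ∀ (s : ℝ → ℝ), Measurable s → (∀ x, ‖s x‖ ≤ C) →
      ∀ (A : Set (ℝ × ℝ)), MeasurableSet A →
      ∫ ω, (s (V ω) * R ω) * A.indicator (fun _ => (1:ℝ)) (Y ω, W ω) ∂μ
        = ∫ ω, (s (V ω) * e ω) * A.indicator (fun _ => (1:ℝ)) (Y ω, W ω) ∂μ := by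
    intro s hs hsb A hA
    have hIA : Measurable (fun ω => A.indicator (fun _ => (1:ℝ)) (Y ω, W ω)) :=
      (measurable_const.indicator hA).comp (hY.prodMk hW)
    have hIAb : ∀ ω, ‖A.indicator (fun _ => (1:ℝ)) (Y ω, W ω)‖ ≤ 1 := fun ω => by
      by_cases h : (Y ω, W ω) ∈ A <;> simp [h]
    have hIAint : Integrable (fun ω => A.indicator (fun _ => (1:ℝ)) (Y ω, W ω)) μ :=
      Integrable.mono' (integrable_const 1) hIA.aestronglyMeasurable (ae_of_all _ hIAb)
    have hFmeas : Measurable (fun ω => A.indicator (fun _ => (1:ℝ)) (Y ω, W ω) * R ω) :=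
      hIA.mul hR
    have hFint : Integrable (fun ω => A.indicator (fun _ => (1:ℝ)) (Y ω, W ω) * R ω) μ :=
      hRint.bdd_mul hIA.aestronglyMeasurable (ae_of_all _ hIAb)
    have hsV : StronglyMeasurable[MeasurableSpace.comap V inferInstance] (fun ω => s (V ω)) :=
      (hs.comp hVmeas).stronglyMeasurable
    have hsVF : Integrable
        (fun ω => s (V ω) * (A.indicator (fun _ => (1:ℝ)) (Y ω, W ω) * R ω)) μ :=
      hFint.bdd_mul (hs.comp hV).aestronglyMeasurable (ae_of_all _ fun ω => hsb _)
    have hCIA := hCI A {1} hA (measurableSet_singleton 1)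
    -- translate the conditional independence statement
    have c2 : μ[(fun ω' => ({(1:ℝ)} : Set ℝ).indicator (fun _ => (1:ℝ)) (R ω')) |
          MeasurableSpace.comap V inferInstance] =ᵐ[μ] e := by
      rw [he_def]
      exact condExp_congr_ae (ae_of_all _ fun ω => by rcases hR01 ω with h | h <;> simp [h])
    have c1 : μ[(fun ω => A.indicator (fun _ => (1:ℝ)) (Y ω, W ω) * R ω) |
          MeasurableSpace.comap V inferInstance] =ᵐ[μ]
        fun ω => (μ[(fun ω => A.indicator (fun _ => (1:ℝ)) (Y ω, W ω)) |
          MeasurableSpace.comap V inferInstance]) ω * e ω := by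
      refine (condExp_congr_ae (ae_of_all _ fun ω => ?_)).trans (hCIA.trans ?_)
      · rcases hR01 ω with h | h <;> simp [h]
      · filter_upwards [c2] with ω hω
        rw [hω]
    calc ∫ ω, (s (V ω) * R ω) * A.indicator (fun _ => (1:ℝ)) (Y ω, W ω) ∂μ
        = ∫ ω, s (V ω) * (A.indicator (fun _ => (1:ℝ)) (Y ω, W ω) * R ω) ∂μ :=
          integral_congr_ae (ae_of_all _ fun ω => by ring)
      _ = ∫ ω, s (V ω) * (μ[(fun ω => A.indicator (fun _ => (1:ℝ)) (Y ω, W ω) * R ω) |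
            MeasurableSpace.comap V inferInstance]) ω ∂μ :=
          integral_mul_eq_integral_mul_condexp hVle hsV hsVF hFint
      _ = ∫ ω, s (V ω) * ((μ[(fun ω => A.indicator (fun _ => (1:ℝ)) (Y ω, W ω)) |
            MeasurableSpace.comap V inferInstance]) ω * e ω) ∂μ := by
          refine integral_congr_ae ?_
          filter_upwards [c1] with ω hω
          rw [hω]
      _ = ∫ ω, (fun ω => s (V ω) * e ω) ω * (μ[(fun ω => A.indicator (fun _ => (1:ℝ)) (Y ω, W ω)) |
            MeasurableSpace.comap V inferInstance]) ω ∂μ :=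
          integral_congr_ae (ae_of_all _ fun ω => by simp only; ring)
      _ = ∫ ω, (fun ω => s (V ω) * e ω) ω * A.indicator (fun _ => (1:ℝ)) (Y ω, W ω) ∂μ := by
          have hb2 : ∀ᵐ ω ∂μ, ‖s (V ω) * e ω‖ ≤ C := by
            filter_upwards [heb] with ω hω
            rw [norm_mul]
            calc ‖s (V ω)‖ * ‖e ω‖ ≤ C * 1 := mul_le_mul (hsb _) hω (norm_nonneg _) hC0
              _ = C := mul_one C
          have hm2 : AEStronglyMeasurable (fun ω => s (V ω) * e ω) μ := by
            exact (hs.comp hV).aestronglyMeasurable.mul (hesm.mono hVle).aestronglyMeasurable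
          have hintSE : Integrable
              (fun ω => (s (V ω) * e ω) * A.indicator (fun _ => (1:ℝ)) (Y ω, W ω)) μ :=
            hIAint.bdd_mul hm2 hb2
          exact (integral_mul_eq_integral_mul_condexp (φ := fun ω => s (V ω) * e ω) hVle
            (by exact hsV.mul hesm) (by exact hintSE) hIAint).symm
      _ = ∫ ω, (s (V ω) * e ω) * A.indicator (fun _ => (1:ℝ)) (Y ω, W ω) ∂μ := rfl
  -- base case over σ(W, V), by the π-system induction
  have hrwWV : ∀ (φ : Ω → ℝ) (B : Set (ℝ × ℝ)),
      (fun ω => φ ω * B.indicator (fun _ => (1:ℝ)) (W ω, V ω))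
        = ((fun ω => (W ω, V ω)) ⁻¹' B).indicator φ := by
    intro φ B
    funext ω
    by_cases h : (W ω, V ω) ∈ B <;>
      simp [h, Set.indicator_of_mem, Set.indicator_of_notMem, Set.mem_preimage]
  have baseWV : ∀ (A : Set (ℝ × ℝ)), MeasurableSet A →
      ∫ ω, (t (V ω) * R ω) * A.indicator (fun _ => (1:ℝ)) (W ω, V ω) ∂μ
        = ∫ ω, (t (V ω) * e ω) * A.indicator (fun _ => (1:ℝ)) (W ω, V ω) ∂μ := by
    have huniv : ∫ ω, t (V ω) * R ω ∂μ = ∫ ω, t (V ω) * e ω ∂μ :=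
      integral_mul_eq_integral_mul_condexp hVle htV htVRint hRint
    refine MeasurableSpace.induction_on_inter
      (C := fun A _ => ∫ ω, (t (V ω) * R ω) * A.indicator (fun _ => (1:ℝ)) (W ω, V ω) ∂μ
        = ∫ ω, (t (V ω) * e ω) * A.indicator (fun _ => (1:ℝ)) (W ω, V ω) ∂μ)
      generateFrom_prod.symm isPiSystem_prod (by simp) ?_ ?_ ?_
    · -- rectangles
      rintro A ⟨A₁, hA₁, A₂, hA₂, rfl⟩
      have hs' : Measurable (fun x => t x * A₂.indicator (fun _ => (1:ℝ)) x) :=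
        ht.mul (measurable_const.indicator hA₂)
      have hs'b : ∀ x, ‖t x * A₂.indicator (fun _ => (1:ℝ)) x‖ ≤ C := by
        intro x
        by_cases h : x ∈ A₂
        · simpa [h] using hCn x
        · simpa [h] using hC0
      have hb := baseYW (fun x => t x * A₂.indicator (fun _ => (1:ℝ)) x) hs' hs'b
        (Set.univ ×ˢ A₁) (MeasurableSet.univ.prod hA₁)
      calc ∫ ω, (t (V ω) * R ω) * (A₁ ×ˢ A₂).indicator (fun _ => (1:ℝ)) (W ω, V ω) ∂μ
          = ∫ ω, ((t (V ω) * A₂.indicator (fun _ => (1:ℝ)) (V ω)) * R ω) *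
              (Set.univ ×ˢ A₁).indicator (fun _ => (1:ℝ)) (Y ω, W ω) ∂μ := by
            refine integral_congr_ae (ae_of_all _ fun ω => ?_)
            by_cases h1 : W ω ∈ A₁ <;> by_cases h2 : V ω ∈ A₂ <;>
              simp [h1, h2, Set.mem_prod] <;> ring
        _ = ∫ ω, ((t (V ω) * A₂.indicator (fun _ => (1:ℝ)) (V ω)) * e ω) *
              (Set.univ ×ˢ A₁).indicator (fun _ => (1:ℝ)) (Y ω, W ω) ∂μ := hb
        _ = ∫ ω, (t (V ω) * e ω) * (A₁ ×ˢ A₂).indicator (fun _ => (1:ℝ)) (W ω, V ω) ∂μ := by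
            refine integral_congr_ae (ae_of_all _ fun ω => ?_)
            by_cases h1 : W ω ∈ A₁ <;> by_cases h2 : V ω ∈ A₂ <;>
              simp [h1, h2, Set.mem_prod] <;> ring
    · -- complements
      intro A hAm hQ
      have hiA : ∀ ω, (Aᶜ).indicator (fun _ => (1:ℝ)) (W ω, V ω)
          = 1 - A.indicator (fun _ => (1:ℝ)) (W ω, V ω) := fun ω => by
        by_cases h : (W ω, V ω) ∈ A <;> simp [h]
      have hIAm : AEStronglyMeasurable (fun ω => A.indicator (fun _ => (1:ℝ)) (W ω, V ω)) μ :=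
        ((measurable_const.indicator hAm).comp (hW.prodMk hV)).aestronglyMeasurable
      have hIAb : ∀ᵐ ω ∂μ, ‖A.indicator (fun _ => (1:ℝ)) (W ω, V ω)‖ ≤ 1 :=
        ae_of_all _ fun ω => by by_cases h : (W ω, V ω) ∈ A <;> simp [h]
      have int1 : Integrable
          (fun ω => (t (V ω) * R ω) * A.indicator (fun _ => (1:ℝ)) (W ω, V ω)) μ := by
        refine Integrable.bdd_mul ?_ htVR_meas htVR_b
        exact Integrable.mono' (integrable_const 1) hIAm hIAb
      have int2 : Integrable
          (fun ω => (t (V ω) * e ω) * A.indicator (fun _ => (1:ℝ)) (W ω, V ω)) μ := by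
        refine Integrable.bdd_mul ?_ htVe_meas htVe_b
        exact Integrable.mono' (integrable_const 1) hIAm hIAb
      have htVeint : Integrable (fun ω => t (V ω) * e ω) μ := hbdd_int _ htVe_meas htVe_b
      calc ∫ ω, (t (V ω) * R ω) * (Aᶜ).indicator (fun _ => (1:ℝ)) (W ω, V ω) ∂μ
          = ∫ ω, (t (V ω) * R ω) -
              (t (V ω) * R ω) * A.indicator (fun _ => (1:ℝ)) (W ω, V ω) ∂μ := by
            refine integral_congr_ae (ae_of_all _ fun ω => ?_)
            simp only [hiA ω]; ring
        _ = (∫ ω, t (V ω) * R ω ∂μ) -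
              ∫ ω, (t (V ω) * R ω) * A.indicator (fun _ => (1:ℝ)) (W ω, V ω) ∂μ :=
            integral_sub htVRint int1
        _ = (∫ ω, t (V ω) * e ω ∂μ) -
              ∫ ω, (t (V ω) * e ω) * A.indicator (fun _ => (1:ℝ)) (W ω, V ω) ∂μ := by
            rw [huniv, hQ]
        _ = ∫ ω, (t (V ω) * e ω) -
              (t (V ω) * e ω) * A.indicator (fun _ => (1:ℝ)) (W ω, V ω) ∂μ :=
            (integral_sub htVeint int2).symm
        _ = ∫ ω, (t (V ω) * e ω) * (Aᶜ).indicator (fun _ => (1:ℝ)) (W ω, V ω) ∂μ := by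
            refine integral_congr_ae (ae_of_all _ fun ω => ?_)
            simp only [hiA ω]; ring
    · -- countable disjoint unions
      intro f hdisj hmeas hQ
      have hTmeas : ∀ i, MeasurableSet ((fun ω => (W ω, V ω)) ⁻¹' f i) :=
        fun i => (hW.prodMk hV) (hmeas i)
      have hTdisj : Pairwise (Disjoint on fun i => (fun ω => (W ω, V ω)) ⁻¹' f i) :=
        fun i j hij => (hdisj hij).preimage _
      have hU : (fun ω => (W ω, V ω)) ⁻¹' (⋃ i, f i)
          = ⋃ i, (fun ω => (W ω, V ω)) ⁻¹' f i := Set.preimage_iUnion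
      rw [hrwWV, hrwWV, hU, integral_indicator (MeasurableSet.iUnion hTmeas),
        integral_indicator (MeasurableSet.iUnion hTmeas),
        integral_iUnion hTmeas hTdisj (htVRint.integrableOn),
        integral_iUnion hTmeas hTdisj ((hbdd_int _ htVe_meas htVe_b).integrableOn)]
      refine tsum_congr fun i => ?_
      rw [← integral_indicator (hTmeas i), ← integral_indicator (hTmeas i),
        ← hrwWV, ← hrwWV]
      exact hQ i
  -- the five key integral identities
  have hYW_sm : StronglyMeasurable[MeasurableSpace.comap (fun ω => (Y ω, W ω)) inferInstance]
      Y := by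
    have h1 : Measurable[MeasurableSpace.comap (fun ω => (Y ω, W ω)) inferInstance]
        (fun ω => (Y ω, W ω).1) := measurable_fst.comp hYWmeas
    exact h1.stronglyMeasurable
  have hbaseYW' : ∀ S : Set Ω,
      MeasurableSet[MeasurableSpace.comap (fun ω => (Y ω, W ω)) inferInstance] S →
      ∫ ω, (t (V ω) * R ω) * S.indicator (fun _ => (1:ℝ)) ω ∂μ
        = ∫ ω, (t (V ω) * e ω) * S.indicator (fun _ => (1:ℝ)) ω ∂μ := by
    rintro S ⟨A, hA, rfl⟩
    simp only [indicator_preimage_apply]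
    exact baseYW t ht hCn A hA
  have hbaseWV' : ∀ S : Set Ω,
      MeasurableSet[MeasurableSpace.comap (fun ω => (W ω, V ω)) inferInstance] S →
      ∫ ω, (t (V ω) * R ω) * S.indicator (fun _ => (1:ℝ)) ω ∂μ
        = ∫ ω, (t (V ω) * e ω) * S.indicator (fun _ => (1:ℝ)) ω ∂μ := by
    rintro S ⟨A, hA, rfl⟩
    simp only [indicator_preimage_apply]
    exact baseWV A hA
  have hE1 : ∫ ω, (t (V ω) * R ω) * Y ω ∂μ = ∫ ω, (t (V ω) * e ω) * Y ω ∂μ :=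
    integral_mul_eq_of_forall_indicator hYWle htVR_meas htVe_meas htVR_b htVe_b
      hbaseYW' hYW_sm hYint
  have hE2 : ∫ ω, (t (V ω) * R ω) * mWV ω ∂μ = ∫ ω, (t (V ω) * e ω) * mWV ω ∂μ :=
    integral_mul_eq_of_forall_indicator hWVle htVR_meas htVe_meas htVR_b htVe_b
      hbaseWV' hmWVmeas.stronglyMeasurable hmWVint
  have hyVint : Integrable yV μ := integrable_condExp.congr hyVver.symm
  have hE3 : ∫ ω, (t (V ω) * R ω) * yV ω ∂μ = ∫ ω, (t (V ω) * e ω) * yV ω ∂μ := by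
    have hmul0 : Integrable (fun ω => (t (V ω) * R ω) * yV ω) μ :=
      hyVint.bdd_mul htVR_meas htVR_b
    have hmul : Integrable (fun ω => (t (V ω) * yV ω) * R ω) μ :=
      hmul0.congr (ae_of_all _ fun ω => by ring)
    have hp := integral_mul_eq_integral_mul_condexp hVle (htV.mul hyVmeas.stronglyMeasurable)
      hmul hRint
    calc ∫ ω, (t (V ω) * R ω) * yV ω ∂μ
        = ∫ ω, (t (V ω) * yV ω) * R ω ∂μ :=
          integral_congr_ae (ae_of_all _ fun ω => by ring)
      _ = ∫ ω, (t (V ω) * yV ω) * e ω ∂μ := hp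
      _ = ∫ ω, (t (V ω) * e ω) * yV ω ∂μ :=
          integral_congr_ae (ae_of_all _ fun ω => by ring)
  have htVYint : Integrable (fun ω => t (V ω) * Y ω) μ := hYint.bdd_mul htVmeas htVb
  have hE4 : ∫ ω, t (V ω) * yV ω ∂μ = ∫ ω, t (V ω) * Y ω ∂μ := by
    have h1 : ∫ ω, t (V ω) * Y ω ∂μ
        = ∫ ω, t (V ω) * (μ[Y | MeasurableSpace.comap V inferInstance]) ω ∂μ :=
      integral_mul_eq_integral_mul_condexp hVle htV htVYint hYint
    have h2 : ∫ ω, t (V ω) * (μ[Y | MeasurableSpace.comap V inferInstance]) ω ∂μ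
        = ∫ ω, t (V ω) * yV ω ∂μ := by
      refine integral_congr_ae ?_
      filter_upwards [hyVver] with ω hω
      rw [hω]
    exact (h1.trans h2).symm
  have hE5 : ∫ ω, (t (V ω) * e ω) * Y ω ∂μ = ∫ ω, (t (V ω) * e ω) * yV ω ∂μ := by
    have h1 : ∫ ω, (t (V ω) * e ω) * Y ω ∂μ
        = ∫ ω, (t (V ω) * e ω) * (μ[Y | MeasurableSpace.comap V inferInstance]) ω ∂μ :=
      integral_mul_eq_integral_mul_condexp (φ := fun ω => t (V ω) * e ω) hVle
        (by exact htV.mul hesm) (hYint.bdd_mul htVe_meas htVe_b) hYint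
    refine h1.trans (integral_congr_ae ?_)
    filter_upwards [hyVver] with ω hω
    rw [hω]
  have hE6 : ∫ ω, t (V ω) * mWV ω ∂μ = ∫ ω, t (V ω) * Y ω ∂μ := by
    have h1 : ∫ ω, t (V ω) * Y ω ∂μ = ∫ ω, t (V ω) * (μ[Y | MeasurableSpace.comap
        (fun ω => (W ω, V ω)) inferInstance]) ω ∂μ :=
      integral_mul_eq_integral_mul_condexp hWVle (htV.mono hVleWV) htVYint hYint
    have h2 : ∫ ω, t (V ω) * (μ[Y | MeasurableSpace.comap (fun ω => (W ω, V ω))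
        inferInstance]) ω ∂μ = ∫ ω, t (V ω) * mWV ω ∂μ := by
      refine integral_congr_ae ?_
      filter_upwards [hmWVver] with ω hω
      rw [hω]
    exact (h1.trans h2).symm
  have hE7 : ∫ ω, (t (V ω) * e ω) * mWV ω ∂μ = ∫ ω, (t (V ω) * e ω) * Y ω ∂μ := by
    have h1 : ∫ ω, (t (V ω) * e ω) * Y ω ∂μ = ∫ ω, (t (V ω) * e ω) * (μ[Y |
        MeasurableSpace.comap (fun ω => (W ω, V ω)) inferInstance]) ω ∂μ :=
      integral_mul_eq_integral_mul_condexp (φ := fun ω => t (V ω) * e ω) hWVle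
        (by exact (htV.mul hesm).mono hVleWV) (hYint.bdd_mul htVe_meas htVe_b) hYint
    have h2 : ∫ ω, (t (V ω) * e ω) * (μ[Y | MeasurableSpace.comap (fun ω => (W ω, V ω))
        inferInstance]) ω ∂μ = ∫ ω, (t (V ω) * e ω) * mWV ω ∂μ := by
      refine integral_congr_ae ?_
      filter_upwards [hmWVver] with ω hω
      rw [hω]
    exact (h1.trans h2).symm
  -- final assembly
  have i1 : Integrable (fun ω => (t (V ω) * R ω) * Y ω) μ := hYint.bdd_mul htVR_meas htVR_b
  have i2 : Integrable (fun ω => (t (V ω) * R ω) * mWV ω) μ :=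
    hmWVint.bdd_mul htVR_meas htVR_b
  have i3 : Integrable (fun ω => (t (V ω) * R ω) * yV ω) μ :=
    hyVint.bdd_mul htVR_meas htVR_b
  have i4 : Integrable (fun ω => t (V ω) * yV ω) μ := hyVint.bdd_mul htVmeas htVb
  have i5 : Integrable (fun ω => t (V ω) * mWV ω) μ := hmWVint.bdd_mul htVmeas htVb
  rw [show (fun ω => t (V ω) * (R ω * (Y ω - yV ω) + (1 - R ω) * (yV ω - mWV ω)))
      = fun ω => (((t (V ω) * R ω) * Y ω + (t (V ω) * R ω) * mWV ω)
          - 2 * ((t (V ω) * R ω) * yV ω)) + (t (V ω) * yV ω - t (V ω) * mWV ω)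
    from funext fun ω => by ring]
  have j1 : Integrable (fun ω => ((t (V ω) * R ω) * Y ω + (t (V ω) * R ω) * mWV ω)
      - 2 * ((t (V ω) * R ω) * yV ω)) μ := by exact (i1.add i2).sub (i3.const_mul 2)
  have j2 : Integrable (fun ω => t (V ω) * yV ω - t (V ω) * mWV ω) μ := by exact i4.sub i5
  have k1 : Integrable (fun ω => (t (V ω) * R ω) * Y ω + (t (V ω) * R ω) * mWV ω) μ := by
    exact i1.add i2
  have k2 : Integrable (fun ω => 2 * ((t (V ω) * R ω) * yV ω)) μ := by exact i3.const_mul 2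
  rw [integral_add j1 j2, integral_sub k1 k2, integral_add i1 i2,
    integral_sub i4 i5, integral_const_mul]
  rw [hE1, hE2, hE7, hE5, hE3, hE4, hE6]
  ring
end

section
/- Let R, Y, W, V be random variables on a probability space (Ω, ℱ, P) with R taking values in {0,1}, let π(V) be a σ(V)-measurable version of E[R | σ(V)], and suppose there is δ ∈ (0,1) with δ ≤ π(V) ≤ 1 − δ almost surely. Suppose (Y,W) is conditionally independent of R given σ(V). Let u, s be measurable functions with U := u(Y,V) and S := s(W,V) square-integrable, let E[U | σ(V)] and E[S | σ(V)] be σ(V)-measurable versions of their conditional expectations, and let m be a bounded measurable function of V. Define Q := (R/π(V))·(U − E[U | σ(V)]) − ((1−R)/(1−π(V)))·(S − E[S | σ(V)]) and Ψ := ((R − π(V)) / (π(V)(1 − π(V)))) · m(V). Then E[Q · Ψ] = 0. -/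
open MeasureTheory
open scoped ENNReal NNReal

section Helpers

lemma integral_mul_condexp' {Ω : Type*} {m0 m : MeasurableSpace Ω}
    (hle : m0 ≤ m) (μ : @Measure Ω m) [IsProbabilityMeasure μ] {g f : Ω → ℝ}
    (hg : StronglyMeasurable[m0] g) {C : ℝ} (hgb : ∀ᵐ ω ∂μ, |g ω| ≤ C)
    (hf : Integrable f μ) :
    ∫ ω, g ω * f ω ∂μ = ∫ ω, g ω * (μ[f|m0]) ω ∂μ := by
  have hgm : AEStronglyMeasurable g μ := by
    apply StronglyMeasurable.aestronglyMeasurable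
    exact hg.mono hle
  have hgf' : Integrable (g * f) μ :=
    hf.bdd_mul hgm (by simpa [Real.norm_eq_abs] using hgb)
  have h1 : μ[g * f|m0] =ᵐ[μ] g * μ[f|m0] :=
    condExp_mul_of_stronglyMeasurable_left hg hgf' hf
  calc ∫ ω, g ω * f ω ∂μ = ∫ ω, (g * f) ω ∂μ := rfl
    _ = ∫ ω, (μ[g * f|m0]) ω ∂μ := (integral_condExp hle (f := g * f)).symm
    _ = ∫ ω, (g * μ[f|m0]) ω ∂μ := integral_congr_ae h1
    _ = ∫ ω, g ω * (μ[f|m0]) ω ∂μ := rfl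

end Helpers
lemma withDensity_transfer {Ω : Type*} {m2 mΩ : MeasurableSpace Ω}
    (μ : @Measure Ω mΩ) [IsProbabilityMeasure μ]
    (R πV : Ω → ℝ) (T : Ω → ℝ × ℝ) (V : Ω → ℝ)
    (hm2 : m2 = MeasurableSpace.comap T inferInstance ⊔ MeasurableSpace.comap V inferInstance)
    (hT : Measurable T) (hV : Measurable V) (hR : Measurable R) (hπ : Measurable πV)
    (hR01 : ∀ ω, R ω = 0 ∨ R ω = 1)
    (hπ01 : ∀ᵐ ω ∂μ, 0 ≤ πV ω ∧ πV ω ≤ 1)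
    (hrect : ∀ (A : Set (ℝ × ℝ)) (Cs : Set ℝ), MeasurableSet A → MeasurableSet Cs →
      ∫ ω, (A.indicator (fun _ => (1:ℝ)) (T ω) * Cs.indicator (fun _ => (1:ℝ)) (V ω)) * R ω ∂μ
      = ∫ ω, (A.indicator (fun _ => (1:ℝ)) (T ω) * Cs.indicator (fun _ => (1:ℝ)) (V ω)) * πV ω ∂μ)
    (G : Ω → ℝ)
    (hG : StronglyMeasurable[m2] G) :
    ∫ ω, R ω * G ω ∂μ = ∫ ω, πV ω * G ω ∂μ := by
  have hle2 : m2 ≤ mΩ := by rw [hm2]; exact sup_le hT.comap_le hV.comap_le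
  set μ1 : @Measure Ω mΩ := μ.withDensity (fun ω => ENNReal.ofReal (R ω)) with hμ1def
  set μ2 : @Measure Ω mΩ := μ.withDensity (fun ω => ENNReal.ofReal (πV ω)) with hμ2def
  have hμ1fin : IsFiniteMeasure μ1 := by
    constructor
    rw [hμ1def, withDensity_apply _ MeasurableSet.univ, Measure.restrict_univ]
    calc ∫⁻ ω, ENNReal.ofReal (R ω) ∂μ ≤ ∫⁻ _, 1 ∂μ := by
          refine lintegral_mono fun ω => ?_
          rcases hR01 ω with h | h <;> simp [h]
      _ < ⊤ := by simp
  have hμ2fin : IsFiniteMeasure μ2 := by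
    constructor
    rw [hμ2def, withDensity_apply _ MeasurableSet.univ, Measure.restrict_univ]
    calc ∫⁻ ω, ENNReal.ofReal (πV ω) ∂μ ≤ ∫⁻ _, 1 ∂μ := by
          refine lintegral_mono_ae ?_
          filter_upwards [hπ01] with ω hω
          simpa using ENNReal.ofReal_le_one.2 hω.2
      _ < ⊤ := by simp
  -- the π-system of rectangles
  set Srect : Set (Set Ω) := {t | ∃ (A : Set (ℝ × ℝ)) (Cs : Set ℝ),
    MeasurableSet A ∧ MeasurableSet Cs ∧ t = T ⁻¹' A ∩ V ⁻¹' Cs} with hSdef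
  have hSgen : m2 = MeasurableSpace.generateFrom Srect := by
    rw [hm2]
    refine le_antisymm (sup_le ?_ ?_) (MeasurableSpace.generateFrom_le ?_)
    · rintro t ⟨A, hA, rfl⟩
      exact MeasurableSpace.measurableSet_generateFrom
        ⟨A, Set.univ, hA, MeasurableSet.univ, by simp⟩
    · rintro t ⟨Cs, hCs, rfl⟩
      exact MeasurableSpace.measurableSet_generateFrom
        ⟨Set.univ, Cs, MeasurableSet.univ, hCs, by simp⟩
    · rintro t ⟨A, Cs, hA, hCs, rfl⟩
      exact MeasurableSet.inter
        ((le_sup_left : MeasurableSpace.comap T inferInstance ≤ _ ⊔ MeasurableSpace.comap V inferInstance) _ ⟨A, hA, rfl⟩)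
        ((le_sup_right : MeasurableSpace.comap V inferInstance ≤ MeasurableSpace.comap T inferInstance ⊔ _) _ ⟨Cs, hCs, rfl⟩)
  have hpi : IsPiSystem Srect := by
    rintro s ⟨A, Cs, hA, hCs, rfl⟩ t ⟨A', Cs', hA', hCs', rfl⟩ -
    refine ⟨A ∩ A', Cs ∩ Cs', hA.inter hA', hCs.inter hCs', ?_⟩
    ext ω
    simp only [Set.mem_inter_iff, Set.mem_preimage]
    tauto
  -- values on rectangles agree
  have hval : ∀ t ∈ Srect, μ1 t = μ2 t := by
    rintro t ⟨A, Cs, hA, hCs, rfl⟩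
    have hsm : MeasurableSet[mΩ] (T ⁻¹' A ∩ V ⁻¹' Cs) := (hT hA).inter (hV hCs)
    have hIA : Measurable (fun ω => A.indicator (fun _ => (1:ℝ)) (T ω)) :=
      (measurable_const.indicator hA).comp hT
    have hIC : Measurable (fun ω => Cs.indicator (fun _ => (1:ℝ)) (V ω)) :=
      (measurable_const.indicator hCs).comp hV
    have hint : ∀ (g : Ω → ℝ), Measurable g → (∀ᵐ ω ∂μ, |g ω| ≤ 1) → Integrable
        (fun ω => (A.indicator (fun _ => (1:ℝ)) (T ω) * Cs.indicator (fun _ => (1:ℝ)) (V ω))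
          * g ω) μ := by
      intro g hg hgb
      refine Integrable.mono' (g := fun _ => (1:ℝ)) (integrable_const 1)
        (((hIA.mul hIC).mul hg).aestronglyMeasurable (μ := μ)) ?_
      filter_upwards [hgb] with ω hω
      rw [Real.norm_eq_abs, abs_mul, abs_mul]
      have h1 : |A.indicator (fun _ => (1:ℝ)) (T ω)| ≤ 1 := by
        by_cases h : T ω ∈ A <;> simp [h]
      have h2 : |Cs.indicator (fun _ => (1:ℝ)) (V ω)| ≤ 1 := by
        by_cases h : V ω ∈ Cs <;> simp [h]
      exact mul_le_one₀ (mul_le_one₀ h1 (abs_nonneg _) h2) (abs_nonneg _) hω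
    have hR1 : ∀ᵐ ω ∂μ, |R ω| ≤ 1 := by
      refine Filter.Eventually.of_forall fun ω => ?_
      rcases hR01 ω with h | h <;> simp [h]
    have hπ1 : ∀ᵐ ω ∂μ, |πV ω| ≤ 1 := by
      filter_upwards [hπ01] with ω hω
      rw [abs_le]; constructor <;> linarith [hω.1, hω.2]
    have hintR := hint R hR hR1
    have hintπ := hint πV hπ hπ1
    have hptR : ∀ ω, (T ⁻¹' A ∩ V ⁻¹' Cs).indicator (fun ω => ENNReal.ofReal (R ω)) ω
        = ENNReal.ofReal ((A.indicator (fun _ => (1:ℝ)) (T ω)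
            * Cs.indicator (fun _ => (1:ℝ)) (V ω)) * R ω) := by
      intro ω
      by_cases h1 : T ω ∈ A <;> by_cases h2 : V ω ∈ Cs <;>
        simp [Set.indicator_apply, h1, h2]
    have hptπ : ∀ ω, (T ⁻¹' A ∩ V ⁻¹' Cs).indicator (fun ω => ENNReal.ofReal (πV ω)) ω
        = ENNReal.ofReal ((A.indicator (fun _ => (1:ℝ)) (T ω)
            * Cs.indicator (fun _ => (1:ℝ)) (V ω)) * πV ω) := by
      intro ω
      by_cases h1 : T ω ∈ A <;> by_cases h2 : V ω ∈ Cs <;>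
        simp [Set.indicator_apply, h1, h2]
    have hnnR : 0 ≤ᵐ[μ] fun ω => (A.indicator (fun _ => (1:ℝ)) (T ω)
        * Cs.indicator (fun _ => (1:ℝ)) (V ω)) * R ω := by
      refine Filter.Eventually.of_forall fun ω => ?_
      have h1 : (0:ℝ) ≤ A.indicator (fun _ => (1:ℝ)) (T ω) := by
        by_cases h : T ω ∈ A <;> simp [h]
      have h2 : (0:ℝ) ≤ Cs.indicator (fun _ => (1:ℝ)) (V ω) := by
        by_cases h : V ω ∈ Cs <;> simp [h]
      have h3 : (0:ℝ) ≤ R ω := by rcases hR01 ω with h | h <;> simp [h]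
      positivity
    have hnnπ : 0 ≤ᵐ[μ] fun ω => (A.indicator (fun _ => (1:ℝ)) (T ω)
        * Cs.indicator (fun _ => (1:ℝ)) (V ω)) * πV ω := by
      filter_upwards [hπ01] with ω hω
      have h1 : (0:ℝ) ≤ A.indicator (fun _ => (1:ℝ)) (T ω) := by
        by_cases h : T ω ∈ A <;> simp [h]
      have h2 : (0:ℝ) ≤ Cs.indicator (fun _ => (1:ℝ)) (V ω) := by
        by_cases h : V ω ∈ Cs <;> simp [h]
      have h3 : (0:ℝ) ≤ πV ω := hω.1
      positivity
    calc μ1 (T ⁻¹' A ∩ V ⁻¹' Cs)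
        = ∫⁻ ω in (T ⁻¹' A ∩ V ⁻¹' Cs), ENNReal.ofReal (R ω) ∂μ := by
          rw [hμ1def, withDensity_apply _ hsm]
      _ = ∫⁻ ω, (T ⁻¹' A ∩ V ⁻¹' Cs).indicator (fun ω => ENNReal.ofReal (R ω)) ω ∂μ := by
          rw [lintegral_indicator hsm]
      _ = ∫⁻ ω, ENNReal.ofReal ((A.indicator (fun _ => (1:ℝ)) (T ω)
            * Cs.indicator (fun _ => (1:ℝ)) (V ω)) * R ω) ∂μ := by
          exact lintegral_congr hptR
      _ = ENNReal.ofReal (∫ ω, (A.indicator (fun _ => (1:ℝ)) (T ω)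
            * Cs.indicator (fun _ => (1:ℝ)) (V ω)) * R ω ∂μ) :=
          (ofReal_integral_eq_lintegral_ofReal hintR hnnR).symm
      _ = ENNReal.ofReal (∫ ω, (A.indicator (fun _ => (1:ℝ)) (T ω)
            * Cs.indicator (fun _ => (1:ℝ)) (V ω)) * πV ω ∂μ) := by
          rw [hrect A Cs hA hCs]
      _ = ∫⁻ ω, ENNReal.ofReal ((A.indicator (fun _ => (1:ℝ)) (T ω)
            * Cs.indicator (fun _ => (1:ℝ)) (V ω)) * πV ω) ∂μ :=
          ofReal_integral_eq_lintegral_ofReal hintπ hnnπ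
      _ = ∫⁻ ω, (T ⁻¹' A ∩ V ⁻¹' Cs).indicator (fun ω => ENNReal.ofReal (πV ω)) ω ∂μ :=
          (lintegral_congr hptπ).symm
      _ = μ2 (T ⁻¹' A ∩ V ⁻¹' Cs) := by
          rw [hμ2def, withDensity_apply _ hsm, lintegral_indicator hsm]
  -- trimmed measures agree
  haveI : IsFiniteMeasure (μ1.trim hle2) := by
    constructor
    rw [trim_measurableSet_eq hle2 MeasurableSet.univ]
    exact measure_lt_top μ1 _
  have htrim : μ1.trim hle2 = μ2.trim hle2 := by
    refine ext_of_generate_finite Srect hSgen hpi ?_ ?_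
    · intro t ht
      have ht2 : MeasurableSet[m2] t := by
        rw [hSgen]; exact MeasurableSpace.measurableSet_generateFrom ht
      rw [trim_measurableSet_eq hle2 ht2, trim_measurableSet_eq hle2 ht2]
      exact hval t ht
    · rw [trim_measurableSet_eq hle2 MeasurableSet.univ,
        trim_measurableSet_eq hle2 MeasurableSet.univ]
      have := hval Set.univ ⟨Set.univ, Set.univ, MeasurableSet.univ, MeasurableSet.univ,
        by simp⟩
      simpa using this
  -- transfer
  have h1 : ∫ ω, G ω ∂μ1 = ∫ ω, R ω * G ω ∂μ := by
    have hμ1' : μ1 = μ.withDensity (fun ω => ((R ω).toNNReal : ℝ≥0∞)) := hμ1def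
    rw [hμ1', integral_withDensity_eq_integral_smul (f := fun ω => (R ω).toNNReal)
      (by exact measurable_real_toNNReal.comp hR) G]
    refine integral_congr_ae (Filter.Eventually.of_forall fun ω => ?_)
    rcases hR01 ω with h | h <;> simp [h, NNReal.smul_def]
  have h2 : ∫ ω, G ω ∂μ2 = ∫ ω, πV ω * G ω ∂μ := by
    have hμ2' : μ2 = μ.withDensity (fun ω => ((πV ω).toNNReal : ℝ≥0∞)) := hμ2def
    rw [hμ2', integral_withDensity_eq_integral_smul (f := fun ω => (πV ω).toNNReal)
      (by exact measurable_real_toNNReal.comp hπ) G]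
    refine integral_congr_ae ?_
    filter_upwards [hπ01] with ω hω
    simp [NNReal.smul_def, Real.coe_toNNReal _ hω.1]
  have h3 : ∫ ω, G ω ∂μ1 = ∫ ω, G ω ∂μ2 := by
    rw [integral_trim hle2 hG (μ := μ1), integral_trim hle2 hG (μ := μ2), htrim]
  rw [← h1, ← h2, h3]

lemma main_aux {Ω : Type*} {m0 m2 mΩ : MeasurableSpace Ω}
    (μ : @Measure Ω mΩ) [IsProbabilityMeasure μ]
    (R Y W V πV eU eS : Ω → ℝ) (YW : Ω → ℝ × ℝ) (u s : ℝ × ℝ → ℝ) (mfn : ℝ → ℝ)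
    (δ Cb : ℝ) (Q Ψ : Ω → ℝ)
    (hm0 : m0 = MeasurableSpace.comap V inferInstance)
    (hYWdef : YW = fun ω => (Y ω, W ω))
    (hm2 : m2 = MeasurableSpace.comap YW inferInstance ⊔ m0)
    (hR : Measurable[mΩ] R) (hY : Measurable[mΩ] Y) (hW : Measurable[mΩ] W)
    (hV : Measurable[mΩ] V)
    (hR01 : ∀ ω, R ω = 0 ∨ R ω = 1)
    (hπmeas : Measurable[m0] πV)
    (hπver : πV =ᵐ[μ] μ[R | m0])
    (hδ0 : 0 < δ) (hδ1 : δ < 1)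
    (hπbound : ∀ᵐ ω ∂μ, δ ≤ πV ω ∧ πV ω ≤ 1 - δ)
    (hCI : ∀ (A : Set (ℝ × ℝ)) (B : Set ℝ), MeasurableSet A → MeasurableSet B →
      μ[fun ω => A.indicator (fun _ => (1 : ℝ)) (YW ω) *
          B.indicator (fun _ => (1 : ℝ)) (R ω) | m0]
        =ᵐ[μ]
      fun ω => (μ[fun ω' => A.indicator (fun _ => (1 : ℝ)) (YW ω') | m0]) ω *
               (μ[fun ω' => B.indicator (fun _ => (1 : ℝ)) (R ω') | m0]) ω)
    (hu : Measurable u) (hs : Measurable s)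
    (hU2 : MemLp (fun ω => u (Y ω, V ω)) 2 μ)
    (hS2 : MemLp (fun ω => s (W ω, V ω)) 2 μ)
    (heUmeas : Measurable[m0] eU)
    (heUver : eU =ᵐ[μ] μ[fun ω => u (Y ω, V ω) | m0])
    (heSmeas : Measurable[m0] eS)
    (heSver : eS =ᵐ[μ] μ[fun ω => s (W ω, V ω) | m0])
    (hmfn : Measurable mfn) (hCb : ∀ x, |mfn x| ≤ Cb)
    (hQ : Q = fun ω => (R ω / πV ω) * (u (Y ω, V ω) - eU ω)
      - ((1 - R ω) / (1 - πV ω)) * (s (W ω, V ω) - eS ω))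
    (hΨ : Ψ = fun ω => ((R ω - πV ω) / (πV ω * (1 - πV ω))) * mfn (V ω)) :
    ∫ ω, Q ω * Ψ ω ∂μ = 0 := by
  have hCb0 : 0 ≤ Cb := le_trans (abs_nonneg _) (hCb 0)
  have hle : m0 ≤ mΩ := by rw [hm0]; exact hV.comap_le
  have hYW : Measurable[mΩ] YW := by rw [hYWdef]; exact hY.prodMk hW
  have hπmΩ : Measurable[mΩ] πV := hπmeas.mono hle le_rfl
  have heUmΩ : Measurable[mΩ] eU := heUmeas.mono hle le_rfl
  have heSmΩ : Measurable[mΩ] eS := heSmeas.mono hle le_rfl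
  have hVm0 : Measurable[m0] V := by
    rw [hm0]; exact comap_measurable V
  have hπ01 : ∀ᵐ ω ∂μ, 0 ≤ πV ω ∧ πV ω ≤ 1 := by
    filter_upwards [hπbound] with ω hω
    constructor <;> linarith [hω.1, hω.2]
  -- the key conditional-independence consequence
  have hdag : ∀ (A : Set (ℝ × ℝ)), MeasurableSet A →
      μ[fun ω => A.indicator (fun _ => (1:ℝ)) (YW ω) * R ω | m0]
        =ᵐ[μ]
      fun ω => (μ[fun ω' => A.indicator (fun _ => (1:ℝ)) (YW ω') | m0]) ω * πV ω := by
    intro A hA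
    have hind : ∀ ω, ({1} : Set ℝ).indicator (fun _ => (1:ℝ)) (R ω) = R ω := by
      intro ω; rcases hR01 ω with h | h <;> simp [h]
    have h := hCI A {1} hA (measurableSet_singleton 1)
    have e1 : (fun ω => A.indicator (fun _ => (1:ℝ)) (YW ω) *
        ({1} : Set ℝ).indicator (fun _ => (1:ℝ)) (R ω))
        = fun ω => A.indicator (fun _ => (1:ℝ)) (YW ω) * R ω :=
      funext fun ω => by rw [hind ω]
    have e2 : (fun ω' => ({1} : Set ℝ).indicator (fun _ => (1:ℝ)) (R ω')) = R :=
      funext hind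
    rw [e1, e2] at h
    refine h.trans ?_
    filter_upwards [hπver] with ω hω
    rw [hω]
  -- rectangle identity
  have hrect : ∀ (A : Set (ℝ × ℝ)) (Cs : Set ℝ), MeasurableSet A → MeasurableSet Cs →
      ∫ ω, (A.indicator (fun _ => (1:ℝ)) (YW ω) * Cs.indicator (fun _ => (1:ℝ)) (V ω)) * R ω ∂μ
      = ∫ ω, (A.indicator (fun _ => (1:ℝ)) (YW ω) * Cs.indicator (fun _ => (1:ℝ)) (V ω))
          * πV ω ∂μ := by
    intro A Cs hA hCs
    have hIAm : Measurable[mΩ] (fun ω => A.indicator (fun _ => (1:ℝ)) (YW ω)) :=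
      (measurable_const.indicator hA).comp hYW
    have hICm0 : Measurable[m0] (fun ω => Cs.indicator (fun _ => (1:ℝ)) (V ω)) :=
      (measurable_const.indicator hCs).comp hVm0
    have hICπ : Measurable[m0] (fun ω => Cs.indicator (fun _ => (1:ℝ)) (V ω) * πV ω) :=
      hICm0.mul hπmeas
    have hIA1 : ∀ ω, |A.indicator (fun _ => (1:ℝ)) (YW ω)| ≤ 1 := by
      intro ω; by_cases h : YW ω ∈ A <;> simp [h]
    have hIC1 : ∀ ω, |Cs.indicator (fun _ => (1:ℝ)) (V ω)| ≤ 1 := by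
      intro ω; by_cases h : V ω ∈ Cs <;> simp [h]
    have hR1 : ∀ ω, |R ω| ≤ 1 := by
      intro ω; rcases hR01 ω with h | h <;> simp [h]
    have hIAint : Integrable (fun ω => A.indicator (fun _ => (1:ℝ)) (YW ω)) μ := by
      refine Integrable.mono' (integrable_const 1)
        (hIAm.aestronglyMeasurable (μ := μ)) ?_
      exact Filter.Eventually.of_forall fun ω => by
        rw [Real.norm_eq_abs]; exact hIA1 ω
    have hIARint : Integrable (fun ω => A.indicator (fun _ => (1:ℝ)) (YW ω) * R ω) μ := by
      refine Integrable.mono' (integrable_const 1)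
        ((hIAm.mul hR).aestronglyMeasurable (μ := μ)) ?_
      refine Filter.Eventually.of_forall fun ω => ?_
      rw [Real.norm_eq_abs, abs_mul]
      exact mul_le_one₀ (hIA1 ω) (abs_nonneg _) (hR1 ω)
    calc ∫ ω, (A.indicator (fun _ => (1:ℝ)) (YW ω) * Cs.indicator (fun _ => (1:ℝ)) (V ω))
            * R ω ∂μ
        = ∫ ω, Cs.indicator (fun _ => (1:ℝ)) (V ω)
            * (A.indicator (fun _ => (1:ℝ)) (YW ω) * R ω) ∂μ :=
          integral_congr_ae (Filter.Eventually.of_forall fun ω => by ring)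
      _ = ∫ ω, Cs.indicator (fun _ => (1:ℝ)) (V ω)
            * (μ[fun ω => A.indicator (fun _ => (1:ℝ)) (YW ω) * R ω|m0]) ω ∂μ :=
          integral_mul_condexp' hle μ hICm0.stronglyMeasurable
            (Filter.Eventually.of_forall hIC1) hIARint
      _ = ∫ ω, (Cs.indicator (fun _ => (1:ℝ)) (V ω) * πV ω)
            * (μ[fun ω' => A.indicator (fun _ => (1:ℝ)) (YW ω')|m0]) ω ∂μ := by
          refine integral_congr_ae ?_
          filter_upwards [hdag A hA] with ω hω
          rw [hω]; ring
      _ = ∫ ω, (Cs.indicator (fun _ => (1:ℝ)) (V ω) * πV ω)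
            * A.indicator (fun _ => (1:ℝ)) (YW ω) ∂μ := by
          refine (integral_mul_condexp' hle μ hICπ.stronglyMeasurable (C := 1) ?_ hIAint).symm
          filter_upwards [hπ01] with ω hω
          rw [abs_mul]
          refine mul_le_one₀ (hIC1 ω) (abs_nonneg _) ?_
          rw [abs_le]; constructor <;> linarith [hω.1, hω.2]
      _ = ∫ ω, (A.indicator (fun _ => (1:ℝ)) (YW ω) * Cs.indicator (fun _ => (1:ℝ)) (V ω))
            * πV ω ∂μ :=
          integral_congr_ae (Filter.Eventually.of_forall fun ω => by ring)
  -- transfer principle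
  have hkey : ∀ G : Ω → ℝ, StronglyMeasurable[m2] G →
      ∫ ω, R ω * G ω ∂μ = ∫ ω, πV ω * G ω ∂μ := by
    intro G hG
    refine withDensity_transfer μ R πV YW V (by rw [hm2, hm0]) hYW hV hR hπmΩ hR01 hπ01
      hrect G hG
  -- m2-measurability of the integrands
  have hm0le2 : m0 ≤ m2 := by rw [hm2]; exact le_sup_right
  have hle2 : m2 ≤ mΩ := by rw [hm2, hm0]; exact sup_le hYW.comap_le hV.comap_le
  have hYm2 : Measurable[m2] Y := by
    have h := measurable_fst.comp (comap_measurable (m := Prod.instMeasurableSpace) YW)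
    have e : (fun ω => (YW ω).1) = Y := by rw [hYWdef]
    have h' : Measurable[MeasurableSpace.comap YW inferInstance] Y := e ▸ h
    exact h'.mono (by rw [hm2]; exact le_sup_left) le_rfl
  have hWm2 : Measurable[m2] W := by
    have h := measurable_snd.comp (comap_measurable (m := Prod.instMeasurableSpace) YW)
    have e : (fun ω => (YW ω).2) = W := by rw [hYWdef]
    have h' : Measurable[MeasurableSpace.comap YW inferInstance] W := e ▸ h
    exact h'.mono (by rw [hm2]; exact le_sup_left) le_rfl
  have hVm2 : Measurable[m2] V := hVm0.mono hm0le2 le_rfl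
  have hπm2 : Measurable[m2] πV := hπmeas.mono hm0le2 le_rfl
  have heUm2 : Measurable[m2] eU := heUmeas.mono hm0le2 le_rfl
  have heSm2 : Measurable[m2] eS := heSmeas.mono hm0le2 le_rfl
  have hG1m : Measurable[m2] (fun ω => (u (Y ω, V ω) - eU ω) * (mfn (V ω) / (πV ω) ^ 2)) :=
    ((hu.comp (hYm2.prodMk hVm2)).sub heUm2).mul
      ((hmfn.comp hVm2).div (hπm2.pow_const 2))
  have hG2m : Measurable[m2] (fun ω => (s (W ω, V ω) - eS ω) * (mfn (V ω) / (1 - πV ω) ^ 2)) :=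
    ((hs.comp (hWm2.prodMk hVm2)).sub heSm2).mul
      ((hmfn.comp hVm2).div ((measurable_const.sub hπm2).pow_const 2))
  -- integrability
  have hUint : Integrable (fun ω => u (Y ω, V ω)) μ := hU2.integrable one_le_two
  have hSint : Integrable (fun ω => s (W ω, V ω)) μ := hS2.integrable one_le_two
  have heUint : Integrable eU μ := integrable_condExp.congr heUver.symm
  have heSint : Integrable eS μ := integrable_condExp.congr heSver.symm
  have habs1 : ∀ x p : ℝ, δ ≤ p → |mfn x / p| ≤ Cb / δ := by
    intro x p hp
    rw [abs_div]
    exact div_le_div₀ hCb0 (hCb x) hδ0 (le_trans hp (le_abs_self p))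
  have habs2 : ∀ x p : ℝ, δ ≤ p → |mfn x / p ^ 2| ≤ Cb / δ ^ 2 := by
    intro x p hp
    rw [abs_div, abs_pow]
    exact div_le_div₀ hCb0 (hCb x) (pow_pos hδ0 2)
      (pow_le_pow_left₀ hδ0.le (le_trans hp (le_abs_self p)) 2)
  have hfac1 : Measurable[mΩ] (fun ω => mfn (V ω) / (πV ω) ^ 2) :=
    (hmfn.comp hV).div (hπmΩ.pow_const 2)
  have hfac2 : Measurable[mΩ] (fun ω => mfn (V ω) / (1 - πV ω) ^ 2) :=
    (hmfn.comp hV).div ((measurable_const.sub hπmΩ).pow_const 2)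
  have hfac1bd : ∀ᵐ ω ∂μ, ‖mfn (V ω) / (πV ω) ^ 2‖ ≤ Cb / δ ^ 2 := by
    filter_upwards [hπbound] with ω hω
    rw [Real.norm_eq_abs]; exact habs2 (V ω) (πV ω) hω.1
  have hfac2bd : ∀ᵐ ω ∂μ, ‖mfn (V ω) / (1 - πV ω) ^ 2‖ ≤ Cb / δ ^ 2 := by
    filter_upwards [hπbound] with ω hω
    rw [Real.norm_eq_abs]; exact habs2 (V ω) (1 - πV ω) (by linarith [hω.2])
  have hIG1 : Integrable (fun ω => (u (Y ω, V ω) - eU ω) * (mfn (V ω) / (πV ω) ^ 2)) μ := by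
    have h := (hUint.sub heUint).bdd_mul (hfac1.aestronglyMeasurable (μ := μ)) hfac1bd
    exact h.congr (Filter.Eventually.of_forall fun ω => by simp only [Pi.sub_apply]; ring)
  have hIG2 : Integrable (fun ω => (s (W ω, V ω) - eS ω) * (mfn (V ω) / (1 - πV ω) ^ 2)) μ := by
    have h := (hSint.sub heSint).bdd_mul (hfac2.aestronglyMeasurable (μ := μ)) hfac2bd
    exact h.congr (Filter.Eventually.of_forall fun ω => by simp only [Pi.sub_apply]; ring)
  have hRn1 : ∀ᵐ ω ∂μ, ‖R ω‖ ≤ 1 :=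
    Filter.Eventually.of_forall fun ω => by rcases hR01 ω with h | h <;> simp [h]
  have h1Rn1 : ∀ᵐ ω ∂μ, ‖1 - R ω‖ ≤ 1 :=
    Filter.Eventually.of_forall fun ω => by rcases hR01 ω with h | h <;> simp [h]
  have hπn1 : ∀ᵐ ω ∂μ, ‖πV ω‖ ≤ 1 := by
    filter_upwards [hπ01] with ω hω
    rw [Real.norm_eq_abs, abs_le]; constructor <;> linarith [hω.1, hω.2]
  have hRG1 : Integrable
      (fun ω => R ω * ((u (Y ω, V ω) - eU ω) * (mfn (V ω) / (πV ω) ^ 2))) μ :=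
    hIG1.bdd_mul (hR.aestronglyMeasurable (μ := μ)) hRn1
  have h1RG2 : Integrable
      (fun ω => (1 - R ω) * ((s (W ω, V ω) - eS ω) * (mfn (V ω) / (1 - πV ω) ^ 2))) μ :=
    hIG2.bdd_mul ((measurable_const.sub hR).aestronglyMeasurable (μ := μ)) h1Rn1
  have hRG2 : Integrable
      (fun ω => R ω * ((s (W ω, V ω) - eS ω) * (mfn (V ω) / (1 - πV ω) ^ 2))) μ :=
    hIG2.bdd_mul (hR.aestronglyMeasurable (μ := μ)) hRn1
  have hπG2 : Integrable
      (fun ω => πV ω * ((s (W ω, V ω) - eS ω) * (mfn (V ω) / (1 - πV ω) ^ 2))) μ :=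
    hIG2.bdd_mul (hπmΩ.aestronglyMeasurable (μ := μ)) hπn1
  -- pointwise algebraic identity
  have e0 : ∫ ω, Q ω * Ψ ω ∂μ =
      ∫ ω, (R ω * ((u (Y ω, V ω) - eU ω) * (mfn (V ω) / (πV ω) ^ 2))
        + (1 - R ω) * ((s (W ω, V ω) - eS ω) * (mfn (V ω) / (1 - πV ω) ^ 2))) ∂μ := by
    refine integral_congr_ae ?_
    filter_upwards [hπbound] with ω hω
    have hp0 : πV ω ≠ 0 := ne_of_gt (lt_of_lt_of_le hδ0 hω.1)
    have hp1 : 1 - πV ω ≠ 0 := ne_of_gt (by linarith [hω.2])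
    simp only [hQ, hΨ]
    rcases hR01 ω with h | h <;> rw [h] <;> field_simp <;> ring
  have e1 : ∫ ω, (R ω * ((u (Y ω, V ω) - eU ω) * (mfn (V ω) / (πV ω) ^ 2))
        + (1 - R ω) * ((s (W ω, V ω) - eS ω) * (mfn (V ω) / (1 - πV ω) ^ 2))) ∂μ
      = ∫ ω, R ω * ((u (Y ω, V ω) - eU ω) * (mfn (V ω) / (πV ω) ^ 2)) ∂μ
        + ∫ ω, (1 - R ω) * ((s (W ω, V ω) - eS ω) * (mfn (V ω) / (1 - πV ω) ^ 2)) ∂μ :=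
    integral_add hRG1 h1RG2
  have e2 : ∫ ω, R ω * ((u (Y ω, V ω) - eU ω) * (mfn (V ω) / (πV ω) ^ 2)) ∂μ
      = ∫ ω, πV ω * ((u (Y ω, V ω) - eU ω) * (mfn (V ω) / (πV ω) ^ 2)) ∂μ :=
    hkey _ hG1m.stronglyMeasurable
  have e4 : ∫ ω, R ω * ((s (W ω, V ω) - eS ω) * (mfn (V ω) / (1 - πV ω) ^ 2)) ∂μ
      = ∫ ω, πV ω * ((s (W ω, V ω) - eS ω) * (mfn (V ω) / (1 - πV ω) ^ 2)) ∂μ :=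
    hkey _ hG2m.stronglyMeasurable
  have e3 : ∫ ω, (1 - R ω) * ((s (W ω, V ω) - eS ω) * (mfn (V ω) / (1 - πV ω) ^ 2)) ∂μ
      = ∫ ω, (s (W ω, V ω) - eS ω) * (mfn (V ω) / (1 - πV ω) ^ 2) ∂μ
        - ∫ ω, R ω * ((s (W ω, V ω) - eS ω) * (mfn (V ω) / (1 - πV ω) ^ 2)) ∂μ := by
    rw [← integral_sub hIG2 hRG2]
    exact integral_congr_ae (Filter.Eventually.of_forall fun ω => by ring)
  have e5 : ∫ ω, (1 - πV ω) * ((s (W ω, V ω) - eS ω) * (mfn (V ω) / (1 - πV ω) ^ 2)) ∂μ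
      = ∫ ω, (s (W ω, V ω) - eS ω) * (mfn (V ω) / (1 - πV ω) ^ 2) ∂μ
        - ∫ ω, πV ω * ((s (W ω, V ω) - eS ω) * (mfn (V ω) / (1 - πV ω) ^ 2)) ∂μ := by
    rw [← integral_sub hIG2 hπG2]
    exact integral_congr_ae (Filter.Eventually.of_forall fun ω => by ring)
  -- the two conditional-expectation orthogonality facts
  have hg1m0 : Measurable[m0] (fun ω => mfn (V ω) / πV ω) := (hmfn.comp hVm0).div hπmeas
  have hg2m0 : Measurable[m0] (fun ω => mfn (V ω) / (1 - πV ω)) :=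
    (hmfn.comp hVm0).div (measurable_const.sub hπmeas)
  have hg1bd : ∀ᵐ ω ∂μ, |mfn (V ω) / πV ω| ≤ Cb / δ := by
    filter_upwards [hπbound] with ω hω; exact habs1 _ _ hω.1
  have hg2bd : ∀ᵐ ω ∂μ, |mfn (V ω) / (1 - πV ω)| ≤ Cb / δ := by
    filter_upwards [hπbound] with ω hω; exact habs1 _ _ (by linarith [hω.2])
  have hg1U : Integrable (fun ω => (mfn (V ω) / πV ω) * u (Y ω, V ω)) μ :=
    hUint.bdd_mul (((hg1m0.mono hle le_rfl)).aestronglyMeasurable (μ := μ))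
      (by simpa only [Real.norm_eq_abs] using hg1bd)
  have hg1eU : Integrable (fun ω => (mfn (V ω) / πV ω) * eU ω) μ :=
    heUint.bdd_mul (((hg1m0.mono hle le_rfl)).aestronglyMeasurable (μ := μ))
      (by simpa only [Real.norm_eq_abs] using hg1bd)
  have hg2S : Integrable (fun ω => (mfn (V ω) / (1 - πV ω)) * s (W ω, V ω)) μ :=
    hSint.bdd_mul (((hg2m0.mono hle le_rfl)).aestronglyMeasurable (μ := μ))
      (by simpa only [Real.norm_eq_abs] using hg2bd)
  have hg2eS : Integrable (fun ω => (mfn (V ω) / (1 - πV ω)) * eS ω) μ :=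
    heSint.bdd_mul (((hg2m0.mono hle le_rfl)).aestronglyMeasurable (μ := μ))
      (by simpa only [Real.norm_eq_abs] using hg2bd)
  have e6 : ∫ ω, πV ω * ((u (Y ω, V ω) - eU ω) * (mfn (V ω) / (πV ω) ^ 2)) ∂μ = 0 := by
    have step1 : ∫ ω, πV ω * ((u (Y ω, V ω) - eU ω) * (mfn (V ω) / (πV ω) ^ 2)) ∂μ
        = ∫ ω, ((mfn (V ω) / πV ω) * u (Y ω, V ω) - (mfn (V ω) / πV ω) * eU ω) ∂μ := by
      refine integral_congr_ae ?_
      filter_upwards [hπbound] with ω hω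
      have hp0 : πV ω ≠ 0 := ne_of_gt (lt_of_lt_of_le hδ0 hω.1)
      field_simp
    rw [step1, integral_sub hg1U hg1eU]
    have h2 : ∫ ω, (mfn (V ω) / πV ω) * u (Y ω, V ω) ∂μ
        = ∫ ω, (mfn (V ω) / πV ω) * (μ[fun ω => u (Y ω, V ω)|m0]) ω ∂μ :=
      integral_mul_condexp' hle μ hg1m0.stronglyMeasurable hg1bd hUint
    have h3 : ∫ ω, (mfn (V ω) / πV ω) * eU ω ∂μ
        = ∫ ω, (mfn (V ω) / πV ω) * (μ[fun ω => u (Y ω, V ω)|m0]) ω ∂μ := by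
      refine integral_congr_ae ?_
      filter_upwards [heUver] with ω hω
      rw [hω]
    rw [h2, h3, sub_self]
  have e7 : ∫ ω, (1 - πV ω) * ((s (W ω, V ω) - eS ω) * (mfn (V ω) / (1 - πV ω) ^ 2)) ∂μ = 0 := by
    have step1 : ∫ ω, (1 - πV ω) * ((s (W ω, V ω) - eS ω) * (mfn (V ω) / (1 - πV ω) ^ 2)) ∂μ
        = ∫ ω, ((mfn (V ω) / (1 - πV ω)) * s (W ω, V ω)
            - (mfn (V ω) / (1 - πV ω)) * eS ω) ∂μ := by
      refine integral_congr_ae ?_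
      filter_upwards [hπbound] with ω hω
      have hp1 : 1 - πV ω ≠ 0 := ne_of_gt (by linarith [hω.2])
      field_simp
    rw [step1, integral_sub hg2S hg2eS]
    have h2 : ∫ ω, (mfn (V ω) / (1 - πV ω)) * s (W ω, V ω) ∂μ
        = ∫ ω, (mfn (V ω) / (1 - πV ω)) * (μ[fun ω => s (W ω, V ω)|m0]) ω ∂μ :=
      integral_mul_condexp' hle μ hg2m0.stronglyMeasurable hg2bd hSint
    have h3 : ∫ ω, (mfn (V ω) / (1 - πV ω)) * eS ω ∂μ
        = ∫ ω, (mfn (V ω) / (1 - πV ω)) * (μ[fun ω => s (W ω, V ω)|m0]) ω ∂μ := by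
      refine integral_congr_ae ?_
      filter_upwards [heSver] with ω hω
      rw [hω]
    rw [h2, h3, sub_self]
  rw [e0, e1, e2, e3, e4]
  linarith [e5, e6, e7]


/-- Orthogonality `E[Q·Ψ] = 0` of the simplified influence term `Q` and the score
component `Ψ` of a correctly specified propensity score model (final step in the
proof of Theorem 4). -/
theorem stmt_16 {Ω : Type*} [MeasurableSpace Ω] (μ : Measure Ω) [IsProbabilityMeasure μ]
    (R Y W V : Ω → ℝ) (hR : Measurable R) (hY : Measurable Y)
    (hW : Measurable W) (hV : Measurable V)
    (hR01 : ∀ ω, R ω = 0 ∨ R ω = 1)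
    (πV : Ω → ℝ)
    (hπmeas : Measurable[MeasurableSpace.comap V inferInstance] πV)
    (hπver : πV =ᵐ[μ] μ[R | MeasurableSpace.comap V inferInstance])
    (δ : ℝ) (hδ : δ ∈ Set.Ioo (0 : ℝ) 1)
    (hπbound : ∀ᵐ ω ∂μ, δ ≤ πV ω ∧ πV ω ≤ 1 - δ)
    (hCI : CondIndepGiven μ (MeasurableSpace.comap V inferInstance)
      (fun ω => (Y ω, W ω)) R)
    (u s : ℝ × ℝ → ℝ) (hu : Measurable u) (hs : Measurable s)
    (hU2 : MemLp (fun ω => u (Y ω, V ω)) 2 μ)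
    (hS2 : MemLp (fun ω => s (W ω, V ω)) 2 μ)
    (eU : Ω → ℝ)
    (heUmeas : Measurable[MeasurableSpace.comap V inferInstance] eU)
    (heUver : eU =ᵐ[μ]
      μ[fun ω => u (Y ω, V ω) | MeasurableSpace.comap V inferInstance])
    (eS : Ω → ℝ)
    (heSmeas : Measurable[MeasurableSpace.comap V inferInstance] eS)
    (heSver : eS =ᵐ[μ]
      μ[fun ω => s (W ω, V ω) | MeasurableSpace.comap V inferInstance])
    (mfn : ℝ → ℝ) (hm : Measurable mfn) (hmb : ∃ C, ∀ x, |mfn x| ≤ C)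
    (Q Ψ : Ω → ℝ)
    (hQ : Q = fun ω => (R ω / πV ω) * (u (Y ω, V ω) - eU ω)
      - ((1 - R ω) / (1 - πV ω)) * (s (W ω, V ω) - eS ω))
    (hΨ : Ψ = fun ω => ((R ω - πV ω) / (πV ω * (1 - πV ω))) * mfn (V ω)) :
    ∫ ω, Q ω * Ψ ω ∂μ = 0 := by
  obtain ⟨Cb, hCb⟩ := hmb
  exact main_aux μ R Y W V πV eU eS (fun ω => (Y ω, W ω)) u s mfn δ Cb Q Ψ rfl rfl rfl
    hR hY hW hV hR01 hπmeas hπver hδ.1 hδ.2 hπbound hCI hu hs hU2 hS2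
    heUmeas heUver heSmeas heSver hm hCb hQ hΨ
end

section
/- Let R, Y, W, V be random variables on a probability space (Ω, ℱ, P) with R taking values in {0,1}, let π(V) be a σ(V)-measurable version of E[R | σ(V)], and suppose there is δ ∈ (0,1) with δ ≤ π(V) ≤ 1 − δ almost surely. Suppose (Y,W) is conditionally independent of R given σ(V). Let u, s be measurable functions with U := u(Y,V) and S := s(W,V) square-integrable, and let E[U | σ(V)], E[S | σ(V)] be σ(V)-measurable versions of their conditional expectations. Define D := (R/π(V))·(U − E[U | σ(V)]) − ((1−R)/(1−π(V)))·(S − E[S | σ(V)]). Then E[D] = 0 and E[D²] = E[ (1/π(V))·Var(U | σ(V)) + (1/(1 − π(V)))·Var(S | σ(V)) ], where Var(U | σ(V)) := E[(U − E[U | σ(V)])² | σ(V)] and Var(S | σ(V)) := E[(S − E[S | σ(V)])² | σ(V)]. -/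
open MeasureTheory

section Aux
variable {α : Type*} {m mα : MeasurableSpace α} {μ : Measure α} [IsProbabilityMeasure μ]

lemma pullout_integral (hm : m ≤ mα)
    {f g : α → ℝ} (hf : StronglyMeasurable[m] f)
    (hfg : Integrable (fun ω => f ω * g ω) μ) (hg : Integrable g μ) :
    ∫ ω, f ω * (μ[g|m]) ω ∂μ = ∫ ω, f ω * g ω ∂μ := by
  have h := condExp_mul_of_stronglyMeasurable_left hf (show Integrable (f * g) μ from hfg) hg
  calc ∫ ω, f ω * (μ[g|m]) ω ∂μ = ∫ ω, (μ[f * g|m]) ω ∂μ :=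
        (integral_congr_ae h).symm
    _ = ∫ ω, (f * g) ω ∂μ := integral_condExp hm
    _ = ∫ ω, f ω * g ω ∂μ := rfl

lemma memLp_two_condexp (hm : m ≤ mα)
    {f : α → ℝ} (hf : MemLp f 2 μ) : MemLp (μ[f|m]) 2 μ := by
  have hfi : Integrable f μ := hf.integrable one_le_two
  have hg2 : MemLp (condExpL2 ℝ ℝ hm (hf.toLp f) : α → ℝ) 2 μ := Lp.memLp _
  have hgi : Integrable (condExpL2 ℝ ℝ hm (hf.toLp f) : α → ℝ) μ := hg2.integrable one_le_two
  have heq : (condExpL2 ℝ ℝ hm (hf.toLp f) : α → ℝ) =ᵐ[μ] μ[f|m] := by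
    refine ae_eq_condExp_of_forall_setIntegral_eq hm hfi
      (fun s _ _ => hgi.integrableOn) (fun s hs hμs => ?_)
      (aestronglyMeasurable_condExpL2 hm _)
    rw [integral_condExpL2_eq hm (hf.toLp f) hs hμs.ne]
    exact setIntegral_congr_ae (hm s hs) ((hf.coeFn_toLp).mono fun x hx _ => hx)
  exact hg2.ae_eq heq

end Aux

lemma sup_comap_eq {Ω : Type*} [mΩ : MeasurableSpace Ω] (Y W V : Ω → ℝ) :
    (MeasurableSpace.comap (fun ω => (Y ω, W ω)) inferInstance
      ⊔ MeasurableSpace.comap V inferInstance : MeasurableSpace Ω)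
    = MeasurableSpace.generateFrom
        ((Set.preimage (fun ω => ((Y ω, W ω), V ω))) ''
          Set.image2 (· ×ˢ ·) { A : Set (ℝ × ℝ) | MeasurableSet A }
            { B : Set ℝ | MeasurableSet B }) := by
  have h1 : (MeasurableSpace.comap (fun ω => ((Y ω, W ω), V ω)) inferInstance
        : MeasurableSpace Ω)
      = MeasurableSpace.comap (fun ω => (Y ω, W ω)) inferInstance
        ⊔ MeasurableSpace.comap V inferInstance := by
    rw [show (inferInstance : MeasurableSpace ((ℝ × ℝ) × ℝ))
        = (MeasurableSpace.comap Prod.fst inferInstance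
            ⊔ MeasurableSpace.comap Prod.snd inferInstance) from rfl,
      MeasurableSpace.comap_sup, MeasurableSpace.comap_comp, MeasurableSpace.comap_comp]
    rfl
  rw [← h1, ← generateFrom_prod, MeasurableSpace.comap_generateFrom]

lemma condexp_sup_aux {Ω : Type*} [mΩ : MeasurableSpace Ω] (μ : Measure Ω)
    [IsProbabilityMeasure μ]
    (R Y W V : Ω → ℝ) (hR : Measurable R) (hY : Measurable Y) (hW : Measurable W)
    (hV : Measurable V)
    (hR01 : ∀ ω, R ω = 0 ∨ R ω = 1)
    (πV : Ω → ℝ)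
    (hπmeas : Measurable[MeasurableSpace.comap V inferInstance] πV)
    (hπver : πV =ᵐ[μ] μ[R | MeasurableSpace.comap V inferInstance])
    (δ : ℝ) (hδ0 : 0 < δ)
    (hπbound : ∀ᵐ ω ∂μ, δ ≤ πV ω ∧ πV ω ≤ 1 - δ)
    (hCI : CondIndepGiven μ (MeasurableSpace.comap V inferInstance)
      (fun ω => (Y ω, W ω)) R) :
    πV =ᵐ[μ] μ[R | MeasurableSpace.comap (fun ω => (Y ω, W ω)) inferInstance
      ⊔ MeasurableSpace.comap V inferInstance] := by
  have hYW : Measurable (fun ω => (Y ω, W ω)) := hY.prodMk hW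
  have hm : MeasurableSpace.comap V inferInstance ≤ mΩ := hV.comap_le
  have hMle : (MeasurableSpace.comap (fun ω => (Y ω, W ω)) inferInstance
      ⊔ MeasurableSpace.comap V inferInstance : MeasurableSpace Ω) ≤ mΩ :=
    sup_le hYW.comap_le hV.comap_le
  have hπ : Measurable πV := hπmeas.mono hm le_rfl
  have hR1 : ∀ ω, ({(1:ℝ)} : Set ℝ).indicator (fun _ => (1:ℝ)) (R ω) = R ω := by
    intro ω; rcases hR01 ω with h | h <;> simp [h]
  -- boundedness facts
  have hRabs : ∀ ω, |R ω| ≤ 1 := by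
    intro ω; rcases hR01 ω with h | h <;> simp [h]
  have hπabs : ∀ᵐ ω ∂μ, |πV ω| ≤ 1 := by
    filter_upwards [hπbound] with ω ⟨h1, h2⟩
    rw [abs_of_pos (lt_of_lt_of_le hδ0 h1)]; linarith
  have hRint : Integrable R μ :=
    (integrable_const (1:ℝ)).mono' hR.aestronglyMeasurable
      (Filter.Eventually.of_forall fun ω => by simpa using hRabs ω)
  have hπint : Integrable πV μ :=
    (integrable_const (1:ℝ)).mono' hπ.aestronglyMeasurable
      (by filter_upwards [hπabs] with ω h using by simpa using h)
  -- the base case: rectangles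
  have hbase : ∀ A : Set (ℝ × ℝ), MeasurableSet A → ∀ B : Set ℝ, MeasurableSet B →
      ∫ ω in (fun ω => (Y ω, W ω)) ⁻¹' A ∩ V ⁻¹' B, R ω ∂μ
        = ∫ ω in (fun ω => (Y ω, W ω)) ⁻¹' A ∩ V ⁻¹' B, πV ω ∂μ := by
    intro A hA B hB
    set IA : Ω → ℝ := fun ω => A.indicator (fun _ => (1:ℝ)) ((fun ω => (Y ω, W ω)) ω) with hIA
    set IB : Ω → ℝ := fun ω => B.indicator (fun _ => (1:ℝ)) (V ω) with hIB
    have hsamb : MeasurableSet ((fun ω => (Y ω, W ω)) ⁻¹' A ∩ V ⁻¹' B) :=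
      (hYW hA).inter (hV hB)
    have hIAamb : Measurable IA := (measurable_const.indicator hA).comp hYW
    have hIBamb : Measurable IB := (measurable_const.indicator hB).comp hV
    have habs1 : ∀ a b : ℝ, |a| ≤ 1 → |b| ≤ 1 → |a * b| ≤ 1 := by
      intro a b ha hb
      rw [abs_mul]
      calc |a| * |b| ≤ 1 * 1 := mul_le_mul ha hb (abs_nonneg _) zero_le_one
        _ = 1 := one_mul 1
    have hIAb : ∀ ω, |IA ω| ≤ 1 := by
      intro ω; rw [hIA]; by_cases h : (Y ω, W ω) ∈ A <;> simp [h]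
    have hIBb : ∀ ω, |IB ω| ≤ 1 := by
      intro ω; rw [hIB]; by_cases h : V ω ∈ B <;> simp [h]
    have hIBm : Measurable[MeasurableSpace.comap V inferInstance] IB :=
      (measurable_const.indicator hB).comp (Measurable.of_comap_le le_rfl)
    have hIAint : Integrable IA μ :=
      (integrable_const (1:ℝ)).mono' hIAamb.aestronglyMeasurable
        (Filter.Eventually.of_forall fun ω => by simpa using hIAb ω)
    have hIAR : Integrable (fun ω => IA ω * R ω) μ :=
      (integrable_const (1:ℝ)).mono' (hIAamb.mul hR).aestronglyMeasurable
        (Filter.Eventually.of_forall fun ω => by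
          simpa only [Real.norm_eq_abs] using habs1 _ _ (hIAb ω) (hRabs ω))
    have hIBIAR : Integrable (fun ω => IB ω * (IA ω * R ω)) μ :=
      (integrable_const (1:ℝ)).mono' (hIBamb.mul (hIAamb.mul hR)).aestronglyMeasurable
        (Filter.Eventually.of_forall fun ω => by
          simpa only [Real.norm_eq_abs] using habs1 _ _ (hIBb ω) (habs1 _ _ (hIAb ω) (hRabs ω)))
    have hIBπIA : Integrable (fun ω => (IB ω * πV ω) * IA ω) μ := by
      refine (integrable_const (1:ℝ)).mono'
        (((hIBamb.mul hπ).mul hIAamb).aestronglyMeasurable) ?_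
      filter_upwards [hπabs] with ω hπw
      simpa only [Real.norm_eq_abs] using habs1 _ _ (habs1 _ _ (hIBb ω) hπw) (hIAb ω)
    -- indicator identities
    have hindR : ∀ ω, ((fun ω => (Y ω, W ω)) ⁻¹' A ∩ V ⁻¹' B).indicator R ω
        = IB ω * (IA ω * R ω) := by
      intro ω
      by_cases h1 : (Y ω, W ω) ∈ A <;> by_cases h2 : V ω ∈ B <;>
        simp [Set.indicator_apply, Set.mem_inter_iff, Set.mem_preimage, h1, h2, hIA, hIB]
    have hindπ : ∀ ω, ((fun ω => (Y ω, W ω)) ⁻¹' A ∩ V ⁻¹' B).indicator πV ω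
        = IB ω * (IA ω * πV ω) := by
      intro ω
      by_cases h1 : (Y ω, W ω) ∈ A <;> by_cases h2 : V ω ∈ B <;>
        simp [Set.indicator_apply, Set.mem_inter_iff, Set.mem_preimage, h1, h2, hIA, hIB]
    -- conditional independence step
    have hCI' := hCI A {(1:ℝ)} hA (measurableSet_singleton 1)
    simp only [hR1] at hCI'
    -- hCI' : μ[fun ω => IA ω * R ω | mV] =ᵐ fun ω => μ[IA|mV] ω * μ[R|mV] ω
    calc ∫ ω in (fun ω => (Y ω, W ω)) ⁻¹' A ∩ V ⁻¹' B, R ω ∂μ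
        = ∫ ω, IB ω * (IA ω * R ω) ∂μ := by
          rw [← integral_indicator hsamb]
          exact integral_congr_ae (Filter.Eventually.of_forall hindR)
      _ = ∫ ω, IB ω * (μ[fun ω' => IA ω' * R ω' | MeasurableSpace.comap V inferInstance]) ω ∂μ :=
          (pullout_integral hm hIBm.stronglyMeasurable hIBIAR hIAR).symm
      _ = ∫ ω, (IB ω * πV ω) *
            (μ[IA | MeasurableSpace.comap V inferInstance]) ω ∂μ := by
          refine integral_congr_ae ?_
          filter_upwards [hCI', hπver] with ω h1 h2
          rw [h1, ← h2]; ring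
      _ = ∫ ω, (IB ω * πV ω) * IA ω ∂μ :=
          pullout_integral hm (hIBm.mul hπmeas).stronglyMeasurable hIBπIA hIAint
      _ = ∫ ω in (fun ω => (Y ω, W ω)) ⁻¹' A ∩ V ⁻¹' B, πV ω ∂μ := by
          rw [← integral_indicator hsamb]
          refine integral_congr_ae (Filter.Eventually.of_forall fun ω => ?_)
          rw [hindπ ω]; ring
  -- total mass
  have huniv : ∫ ω, R ω ∂μ = ∫ ω, πV ω ∂μ := by
    calc ∫ ω, R ω ∂μ = ∫ ω, (μ[R | MeasurableSpace.comap V inferInstance]) ω ∂μ :=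
          (integral_condExp hm).symm
      _ = ∫ ω, πV ω ∂μ := (integral_congr_ae hπver).symm
  have hRnn : ∀ ω, 0 ≤ R ω := fun ω => by rcases hR01 ω with h | h <;> simp [h]
  have hπnn : ∀ᵐ ω ∂μ, 0 ≤ πV ω := by
    filter_upwards [hπbound] with ω h; exact le_trans hδ0.le h.1
  have hpi : IsPiSystem
      ((Set.preimage (fun ω => ((Y ω, W ω), V ω))) ''
        Set.image2 (· ×ˢ ·) { A : Set (ℝ × ℝ) | MeasurableSet A }
          { B : Set ℝ | MeasurableSet B }) := by
    rintro s ⟨P, hP, rfl⟩ t ⟨Q, hQ, rfl⟩ hne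
    rw [← Set.preimage_inter] at hne ⊢
    refine ⟨P ∩ Q, ?_, rfl⟩
    obtain ⟨x, hx⟩ := hne
    exact isPiSystem_prod P hP Q hQ ⟨_, hx⟩
  haveI : IsFiniteMeasure (μ.withDensity fun ω => ENNReal.ofReal (R ω)) :=
    isFiniteMeasure_withDensity_ofReal hRint.hasFiniteIntegral
  haveI : IsFiniteMeasure (μ.withDensity fun ω => ENNReal.ofReal (πV ω)) :=
    isFiniteMeasure_withDensity_ofReal hπint.hasFiniteIntegral
  have hbridge : ∀ f : Ω → ℝ, Measurable f → Integrable f μ → (∀ᵐ ω ∂μ, 0 ≤ f ω) →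
      ∀ s : Set Ω, MeasurableSet[MeasurableSpace.comap (fun ω => (Y ω, W ω)) inferInstance
        ⊔ MeasurableSpace.comap V inferInstance] s →
      (μ.withDensity fun ω => ENNReal.ofReal (f ω)).trim hMle s
        = ENNReal.ofReal (∫ ω in s, f ω ∂μ) := by
    intro f hf hfi hfnn s hs
    rw [trim_measurableSet_eq hMle hs, withDensity_apply _ (hMle s hs),
      ← ofReal_integral_eq_lintegral_ofReal hfi.integrableOn (ae_restrict_of_ae hfnn)]
  have hext : (μ.withDensity fun ω => ENNReal.ofReal (R ω)).trim hMle
      = (μ.withDensity fun ω => ENNReal.ofReal (πV ω)).trim hMle := by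
    refine MeasureTheory.ext_of_generate_finite _ (sup_comap_eq Y W V) hpi ?_ ?_
    · rintro s ⟨P, ⟨A, hA, B, hB, rfl⟩, rfl⟩
      have hpre : (fun ω => ((Y ω, W ω), V ω)) ⁻¹' (A ×ˢ B)
          = (fun ω => (Y ω, W ω)) ⁻¹' A ∩ V ⁻¹' B := Set.mk_preimage_prod _ _
      have hsM : MeasurableSet[MeasurableSpace.comap (fun ω => (Y ω, W ω)) inferInstance
          ⊔ MeasurableSpace.comap V inferInstance]
          ((fun ω => ((Y ω, W ω), V ω)) ⁻¹' (A ×ˢ B)) := by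
        rw [hpre]
        exact MeasurableSet.inter
          ((le_sup_left : MeasurableSpace.comap (fun ω => (Y ω, W ω)) inferInstance ≤ _)
            _ ⟨A, hA, rfl⟩)
          ((le_sup_right : MeasurableSpace.comap V inferInstance ≤ _) _ ⟨B, hB, rfl⟩)
      rw [hbridge R hR hRint (Filter.Eventually.of_forall hRnn) _ hsM,
        hbridge πV hπ hπint hπnn _ hsM, hpre, hbase A hA B hB]
    · rw [hbridge R hR hRint (Filter.Eventually.of_forall hRnn) _ MeasurableSet.univ,
        hbridge πV hπ hπint hπnn _ MeasurableSet.univ, setIntegral_univ, setIntegral_univ,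
        huniv]
  have hsets : ∀ s : Set Ω, MeasurableSet[MeasurableSpace.comap (fun ω => (Y ω, W ω))
      inferInstance ⊔ MeasurableSpace.comap V inferInstance] s →
      ∫ ω in s, πV ω ∂μ = ∫ ω in s, R ω ∂μ := by
    intro s hs
    have h1 := hbridge R hR hRint (Filter.Eventually.of_forall hRnn) s hs
    have h2 := hbridge πV hπ hπint hπnn s hs
    have h3 : ENNReal.ofReal (∫ ω in s, R ω ∂μ) = ENNReal.ofReal (∫ ω in s, πV ω ∂μ) := by
      rw [← h1, ← h2, hext]
    have hR0 : 0 ≤ ∫ ω in s, R ω ∂μ := integral_nonneg hRnn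
    have hπ0 : 0 ≤ ∫ ω in s, πV ω ∂μ := integral_nonneg_of_ae (ae_restrict_of_ae hπnn)
    exact ((ENNReal.ofReal_eq_ofReal_iff hR0 hπ0).mp h3).symm
  exact ae_eq_condExp_of_forall_setIntegral_eq hMle hRint
    (fun s _ _ => hπint.integrableOn) (fun s hs _ => hsets s hs)
    ((hπmeas.mono (le_sup_right (a := MeasurableSpace.comap (fun ω => (Y ω, W ω)) inferInstance)) le_rfl).stronglyMeasurable.aestronglyMeasurable (μ := μ))


section Aux2
variable {α : Type*} {m mα : MeasurableSpace α} {μ : Measure α} [IsProbabilityMeasure μ]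

lemma pullout_integral' (hm : m ≤ mα)
    {f g : α → ℝ} (hf : StronglyMeasurable[m] f)
    (hfg : Integrable (fun ω => f ω * g ω) μ) (hg : Integrable g μ) :
    ∫ ω, f ω * (μ[g|m]) ω ∂μ = ∫ ω, f ω * g ω ∂μ := by
  have h := condExp_mul_of_stronglyMeasurable_left hf (show Integrable (f * g) μ from hfg) hg
  calc ∫ ω, f ω * (μ[g|m]) ω ∂μ = ∫ ω, (μ[f * g|m]) ω ∂μ :=
        (integral_congr_ae h).symm
    _ = ∫ ω, (f * g) ω ∂μ := integral_condExp hm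
    _ = ∫ ω, f ω * g ω ∂μ := rfl

lemma memLp_two_condexp' (hm : m ≤ mα)
    {f : α → ℝ} (hf : MemLp f 2 μ) : MemLp (μ[f|m]) 2 μ := by
  have hfi : Integrable f μ := hf.integrable one_le_two
  have hg2 : MemLp (condExpL2 ℝ ℝ hm (hf.toLp f) : α → ℝ) 2 μ := Lp.memLp _
  have hgi : Integrable (condExpL2 ℝ ℝ hm (hf.toLp f) : α → ℝ) μ := hg2.integrable one_le_two
  have heq : (condExpL2 ℝ ℝ hm (hf.toLp f) : α → ℝ) =ᵐ[μ] μ[f|m] := by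
    refine ae_eq_condExp_of_forall_setIntegral_eq hm hfi
      (fun s _ _ => hgi.integrableOn) (fun s hs hμs => ?_)
      (aestronglyMeasurable_condExpL2 hm _)
    rw [integral_condExpL2_eq hm (hf.toLp f) hs hμs.ne]
    exact setIntegral_congr_ae (hm s hs) ((hf.coeFn_toLp).mono fun x hx _ => hx)
  exact hg2.ae_eq heq

end Aux2

lemma main_aux_s17 {Ω : Type*} {m M : MeasurableSpace Ω} [mΩ : MeasurableSpace Ω]
    (μ : Measure Ω) [IsProbabilityMeasure μ]
    (R : Ω → ℝ) (hR : Measurable R) (hR01 : ∀ ω, R ω = 0 ∨ R ω = 1)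
    (U S πV eU eS : Ω → ℝ)
    (hm : m ≤ mΩ) (hmM : m ≤ M) (hM : M ≤ mΩ)
    (hπm : Measurable[m] πV) (heUm : Measurable[m] eU) (heSm : Measurable[m] eS)
    (hUM : Measurable[M] U) (hSM : Measurable[M] S)
    (hcondM : πV =ᵐ[μ] μ[R | M])
    (δ : ℝ) (hδ0 : 0 < δ)
    (hπbound : ∀ᵐ ω ∂μ, δ ≤ πV ω ∧ πV ω ≤ 1 - δ)
    (hU2 : MemLp U 2 μ) (hS2 : MemLp S 2 μ)
    (heUver : eU =ᵐ[μ] μ[U | m]) (heSver : eS =ᵐ[μ] μ[S | m])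
    (D : Ω → ℝ)
    (hD : D = fun ω => (R ω / πV ω) * (U ω - eU ω)
      - ((1 - R ω) / (1 - πV ω)) * (S ω - eS ω)) :
    (∫ ω, D ω ∂μ = 0) ∧
    ∫ ω, D ω ^ 2 ∂μ = ∫ ω, ((1 / πV ω) * (μ[fun ω' => (U ω' - eU ω') ^ 2 | m]) ω
      + (1 / (1 - πV ω)) * (μ[fun ω' => (S ω' - eS ω') ^ 2 | m]) ω) ∂μ := by
  -- ambient measurability
  have hπ : Measurable πV := hπm.mono hm le_rfl
  have heU : Measurable eU := heUm.mono hm le_rfl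
  have heS : Measurable eS := heSm.mono hm le_rfl
  have hU : Measurable U := hUM.mono hM le_rfl
  have hS : Measurable S := hSM.mono hM le_rfl
  have hπM : Measurable[M] πV := hπm.mono hmM le_rfl
  have heUM : Measurable[M] eU := heUm.mono hmM le_rfl
  have heSM : Measurable[M] eS := heSm.mono hmM le_rfl
  -- integrability basics
  have hRabs : ∀ ω, |R ω| ≤ 1 := by intro ω; rcases hR01 ω with h | h <;> simp [h]
  have hRint : Integrable R μ :=
    (integrable_const (1:ℝ)).mono' hR.aestronglyMeasurable
      (Filter.Eventually.of_forall fun ω => by simpa using hRabs ω)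
  have heU2 : MemLp eU 2 μ := (memLp_two_condexp' hm hU2).ae_eq heUver.symm
  have heS2 : MemLp eS 2 μ := (memLp_two_condexp' hm hS2).ae_eq heSver.symm
  have hUt2 : MemLp (fun ω => U ω - eU ω) 2 μ := hU2.sub heU2
  have hSt2 : MemLp (fun ω => S ω - eS ω) 2 μ := hS2.sub heS2
  have hUt1 : Integrable (fun ω => U ω - eU ω) μ := hUt2.integrable one_le_two
  have hSt1 : Integrable (fun ω => S ω - eS ω) μ := hSt2.integrable one_le_two
  have hUtsq : Integrable (fun ω => (U ω - eU ω) ^ 2) μ := hUt2.integrable_sq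
  have hStsq : Integrable (fun ω => (S ω - eS ω) ^ 2) μ := hSt2.integrable_sq
  -- helper: integrability from ae bound
  have bdd_int : ∀ (f h : Ω → ℝ), AEStronglyMeasurable f μ → Integrable h μ →
      (∀ᵐ ω ∂μ, |f ω| ≤ h ω) → Integrable f μ := fun f h hf hh hfh =>
    hh.mono' hf (by simpa only [Real.norm_eq_abs] using hfh)
  -- division bounds
  have hdivb : ∀ x p : ℝ, δ ≤ p → |x / p| ≤ δ⁻¹ * |x| := by
    intro x p hp
    have hp0 : 0 < p := lt_of_lt_of_le hδ0 hp
    have h1 : |p|⁻¹ ≤ δ⁻¹ := by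
      rw [abs_of_pos hp0]; exact inv_anti₀ hδ0 hp
    calc |x / p| = |x| * |p|⁻¹ := by rw [abs_div, div_eq_mul_inv]
      _ ≤ |x| * δ⁻¹ := mul_le_mul_of_nonneg_left h1 (abs_nonneg x)
      _ = δ⁻¹ * |x| := mul_comm _ _
  have hdivb2 : ∀ x p : ℝ, δ ≤ p → |x ^ 2 / p ^ 2| ≤ δ⁻¹ ^ 2 * x ^ 2 := by
    intro x p hp
    have h := hdivb x p hp
    have h2 : x ^ 2 / p ^ 2 = (x / p) ^ 2 := by ring
    rw [h2, abs_pow]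
    calc |x / p| ^ 2 ≤ (δ⁻¹ * |x|) ^ 2 := pow_le_pow_left₀ (abs_nonneg _) h 2
      _ = δ⁻¹ ^ 2 * x ^ 2 := by rw [mul_pow, sq_abs]
  -- multiply-by-R / π preserves integrability
  have hRmul : ∀ g : Ω → ℝ, Measurable g → Integrable g μ →
      Integrable (fun ω => R ω * g ω) μ := fun g hg hgi =>
    bdd_int _ (fun ω => |g ω|) (hR.mul hg).aestronglyMeasurable hgi.abs
      (Filter.Eventually.of_forall fun ω => by
        rcases hR01 ω with h | h <;> simp [h, abs_nonneg])
  have hπb1 : ∀ᵐ ω ∂μ, |πV ω| ≤ 1 := by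
    filter_upwards [hπbound] with ω h
    rw [abs_of_pos (lt_of_lt_of_le hδ0 h.1)]; linarith
  have hπmul : ∀ g : Ω → ℝ, Measurable g → Integrable g μ →
      Integrable (fun ω => πV ω * g ω) μ := by
    intro g hg hgi
    refine bdd_int _ (fun ω => |g ω|) (hπ.mul hg).aestronglyMeasurable hgi.abs ?_
    filter_upwards [hπb1] with ω h
    rw [abs_mul]
    calc |πV ω| * |g ω| ≤ 1 * |g ω| := mul_le_mul_of_nonneg_right h (abs_nonneg _)
      _ = |g ω| := one_mul _
  -- the key identity: ∫ R g = ∫ π g for M-measurable integrable g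
  have key : ∀ g : Ω → ℝ, Measurable[M] g → Integrable g μ →
      ∫ ω, R ω * g ω ∂μ = ∫ ω, πV ω * g ω ∂μ := by
    intro g hgM hgi
    have hgamb : Measurable g := hgM.mono hM le_rfl
    have hgR : Integrable (fun ω => g ω * R ω) μ := by
      have := hRmul g hgamb hgi
      refine this.congr (Filter.Eventually.of_forall fun ω => mul_comm _ _)
    have h1 : ∫ ω, g ω * (μ[R|M]) ω ∂μ = ∫ ω, g ω * R ω ∂μ :=
      pullout_integral' hM hgM.stronglyMeasurable hgR hRint
    have h2 : ∫ ω, g ω * (μ[R|M]) ω ∂μ = ∫ ω, g ω * πV ω ∂μ := by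
      refine integral_congr_ae ?_
      filter_upwards [hcondM] with ω hω
      rw [← hω]
    calc ∫ ω, R ω * g ω ∂μ = ∫ ω, g ω * R ω ∂μ := by
          refine integral_congr_ae (Filter.Eventually.of_forall fun ω => mul_comm _ _)
      _ = ∫ ω, g ω * πV ω ∂μ := by rw [← h1, h2]
      _ = ∫ ω, πV ω * g ω ∂μ := by
          refine integral_congr_ae (Filter.Eventually.of_forall fun ω => mul_comm _ _)
  -- mean-zero of centered variables
  have hUt0 : ∫ ω, (U ω - eU ω) ∂μ = 0 := by
    rw [integral_sub (hU2.integrable one_le_two) (heU2.integrable one_le_two)]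
    have : ∫ ω, eU ω ∂μ = ∫ ω, U ω ∂μ := by
      calc ∫ ω, eU ω ∂μ = ∫ ω, (μ[U|m]) ω ∂μ := integral_congr_ae heUver
        _ = ∫ ω, U ω ∂μ := integral_condExp hm
    rw [this, sub_self]
  have hSt0 : ∫ ω, (S ω - eS ω) ∂μ = 0 := by
    rw [integral_sub (hS2.integrable one_le_two) (heS2.integrable one_le_two)]
    have : ∫ ω, eS ω ∂μ = ∫ ω, S ω ∂μ := by
      calc ∫ ω, eS ω ∂μ = ∫ ω, (μ[S|m]) ω ∂μ := integral_congr_ae heSver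
        _ = ∫ ω, S ω ∂μ := integral_condExp hm
    rw [this, sub_self]
  -- g1, g2 for the first moment
  have hg1M : Measurable[M] (fun ω => (U ω - eU ω) / πV ω) := (hUM.sub heUM).div hπM
  have hg2M : Measurable[M] (fun ω => (S ω - eS ω) / (1 - πV ω)) :=
    (hSM.sub heSM).div (measurable_const.sub hπM)
  have hg1amb : Measurable (fun ω => (U ω - eU ω) / πV ω) := hg1M.mono hM le_rfl
  have hg2amb : Measurable (fun ω => (S ω - eS ω) / (1 - πV ω)) := hg2M.mono hM le_rfl
  have hg1i : Integrable (fun ω => (U ω - eU ω) / πV ω) μ := by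
    refine bdd_int _ (fun ω => δ⁻¹ * |U ω - eU ω|) hg1amb.aestronglyMeasurable
      (hUt1.abs.const_mul _) ?_
    filter_upwards [hπbound] with ω h
    exact hdivb _ _ h.1
  have hg2i : Integrable (fun ω => (S ω - eS ω) / (1 - πV ω)) μ := by
    refine bdd_int _ (fun ω => δ⁻¹ * |S ω - eS ω|) hg2amb.aestronglyMeasurable
      (hSt1.abs.const_mul _) ?_
    filter_upwards [hπbound] with ω h
    exact hdivb _ _ (by linarith [h.2])
  have hπne : ∀ᵐ ω ∂μ, πV ω ≠ 0 := by
    filter_upwards [hπbound] with ω h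
    exact ne_of_gt (lt_of_lt_of_le hδ0 h.1)
  have h1πne : ∀ᵐ ω ∂μ, 1 - πV ω ≠ 0 := by
    filter_upwards [hπbound] with ω h
    have : δ ≤ 1 - πV ω := by linarith [h.2]
    exact ne_of_gt (lt_of_lt_of_le hδ0 this)
  -- first conjunct
  have hmean : ∫ ω, D ω ∂μ = 0 := by
    have hRg1 := hRmul _ hg1amb hg1i
    have hRg2 := hRmul _ hg2amb hg2i
    have hπg2 := hπmul _ hg2amb hg2i
    have h1Rg2 : Integrable (fun ω => (1 - R ω) * ((S ω - eS ω) / (1 - πV ω))) μ := by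
      have h' := hg2i.sub hRg2
      refine h'.congr (Filter.Eventually.of_forall fun ω => ?_)
      simp only [Pi.sub_apply]; ring
    have e1 : ∫ ω, R ω * ((U ω - eU ω) / πV ω) ∂μ = ∫ ω, (U ω - eU ω) ∂μ := by
      rw [key _ hg1M hg1i]
      refine integral_congr_ae ?_
      filter_upwards [hπne] with ω hω
      field_simp
    have e2 : ∫ ω, (1 - R ω) * ((S ω - eS ω) / (1 - πV ω)) ∂μ
        = ∫ ω, (S ω - eS ω) ∂μ := by
      have ha : ∫ ω, (1 - R ω) * ((S ω - eS ω) / (1 - πV ω)) ∂μ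
          = ∫ ω, ((S ω - eS ω) / (1 - πV ω)) ∂μ
            - ∫ ω, R ω * ((S ω - eS ω) / (1 - πV ω)) ∂μ := by
        rw [← integral_sub hg2i hRg2]
        refine integral_congr_ae (Filter.Eventually.of_forall fun ω => by ring)
      have hb : ∫ ω, ((S ω - eS ω) / (1 - πV ω)) ∂μ
          - ∫ ω, πV ω * ((S ω - eS ω) / (1 - πV ω)) ∂μ
          = ∫ ω, (1 - πV ω) * ((S ω - eS ω) / (1 - πV ω)) ∂μ := by
        rw [← integral_sub hg2i hπg2]
        refine integral_congr_ae (Filter.Eventually.of_forall fun ω => by ring)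
      rw [ha, key _ hg2M hg2i, hb]
      refine integral_congr_ae ?_
      filter_upwards [h1πne] with ω hω
      field_simp
    have hsplit : ∫ ω, D ω ∂μ = ∫ ω, R ω * ((U ω - eU ω) / πV ω) ∂μ
        - ∫ ω, (1 - R ω) * ((S ω - eS ω) / (1 - πV ω)) ∂μ := by
      rw [← integral_sub hRg1 h1Rg2]
      refine integral_congr_ae (Filter.Eventually.of_forall fun ω => ?_)
      rw [hD]; ring
    rw [hsplit, e1, e2, hUt0, hSt0, sub_zero]
  refine ⟨hmean, ?_⟩
  -- second moment
  have hg3M : Measurable[M] (fun ω => (U ω - eU ω) ^ 2 / πV ω ^ 2) :=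
    ((hUM.sub heUM).pow_const 2).div (hπM.pow_const 2)
  have hg4M : Measurable[M] (fun ω => (S ω - eS ω) ^ 2 / (1 - πV ω) ^ 2) :=
    ((hSM.sub heSM).pow_const 2).div ((measurable_const.sub hπM).pow_const 2)
  have hg3amb : Measurable (fun ω => (U ω - eU ω) ^ 2 / πV ω ^ 2) := hg3M.mono hM le_rfl
  have hg4amb : Measurable (fun ω => (S ω - eS ω) ^ 2 / (1 - πV ω) ^ 2) := hg4M.mono hM le_rfl
  have hg3i : Integrable (fun ω => (U ω - eU ω) ^ 2 / πV ω ^ 2) μ := by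
    refine bdd_int _ (fun ω => δ⁻¹ ^ 2 * (U ω - eU ω) ^ 2) hg3amb.aestronglyMeasurable
      (hUtsq.const_mul _) ?_
    filter_upwards [hπbound] with ω h
    exact hdivb2 _ _ h.1
  have hg4i : Integrable (fun ω => (S ω - eS ω) ^ 2 / (1 - πV ω) ^ 2) μ := by
    refine bdd_int _ (fun ω => δ⁻¹ ^ 2 * (S ω - eS ω) ^ 2) hg4amb.aestronglyMeasurable
      (hStsq.const_mul _) ?_
    filter_upwards [hπbound] with ω h
    exact hdivb2 _ _ (by linarith [h.2])
  have hRg3 := hRmul _ hg3amb hg3i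
  have hRg4 := hRmul _ hg4amb hg4i
  have hπg4 := hπmul _ hg4amb hg4i
  have h1Rg4 : Integrable (fun ω => (1 - R ω) * ((S ω - eS ω) ^ 2 / (1 - πV ω) ^ 2)) μ := by
    have h' := hg4i.sub hRg4
    refine h'.congr (Filter.Eventually.of_forall fun ω => ?_)
    simp only [Pi.sub_apply]; ring
  -- pointwise square identity
  have hDsq : ∀ ω, D ω ^ 2 = R ω * ((U ω - eU ω) ^ 2 / πV ω ^ 2)
      + (1 - R ω) * ((S ω - eS ω) ^ 2 / (1 - πV ω) ^ 2) := by
    intro ω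
    rcases hR01 ω with h | h
    · simp only [hD, h, zero_div, zero_mul, zero_sub, sub_zero, one_mul, zero_add]
      rw [neg_sq, one_div_mul_eq_div, div_pow]
    · simp only [hD, h, sub_self, zero_div, zero_mul, sub_zero, one_mul, add_zero]
      rw [one_div_mul_eq_div, div_pow]
  -- LHS computation
  have lhs1 : ∫ ω, D ω ^ 2 ∂μ
      = ∫ ω, R ω * ((U ω - eU ω) ^ 2 / πV ω ^ 2) ∂μ
        + ∫ ω, (1 - R ω) * ((S ω - eS ω) ^ 2 / (1 - πV ω) ^ 2) ∂μ := by
    rw [← integral_add hRg3 h1Rg4]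
    exact integral_congr_ae (Filter.Eventually.of_forall hDsq)
  have lhs2 : ∫ ω, R ω * ((U ω - eU ω) ^ 2 / πV ω ^ 2) ∂μ
      = ∫ ω, (1 / πV ω) * (U ω - eU ω) ^ 2 ∂μ := by
    rw [key _ hg3M hg3i]
    refine integral_congr_ae ?_
    filter_upwards [hπne] with ω hω
    field_simp
    try ring
  have lhs3 : ∫ ω, (1 - R ω) * ((S ω - eS ω) ^ 2 / (1 - πV ω) ^ 2) ∂μ
      = ∫ ω, (1 / (1 - πV ω)) * (S ω - eS ω) ^ 2 ∂μ := by
    have ha : ∫ ω, (1 - R ω) * ((S ω - eS ω) ^ 2 / (1 - πV ω) ^ 2) ∂μ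
        = ∫ ω, ((S ω - eS ω) ^ 2 / (1 - πV ω) ^ 2) ∂μ
          - ∫ ω, R ω * ((S ω - eS ω) ^ 2 / (1 - πV ω) ^ 2) ∂μ := by
      rw [← integral_sub hg4i hRg4]
      refine integral_congr_ae (Filter.Eventually.of_forall fun ω => by ring)
    have hb : ∫ ω, ((S ω - eS ω) ^ 2 / (1 - πV ω) ^ 2) ∂μ
        - ∫ ω, πV ω * ((S ω - eS ω) ^ 2 / (1 - πV ω) ^ 2) ∂μ
        = ∫ ω, (1 - πV ω) * ((S ω - eS ω) ^ 2 / (1 - πV ω) ^ 2) ∂μ := by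
      rw [← integral_sub hg4i hπg4]
      refine integral_congr_ae (Filter.Eventually.of_forall fun ω => by ring)
    rw [ha, key _ hg4M hg4i, hb]
    refine integral_congr_ae ?_
    filter_upwards [h1πne] with ω hω
    field_simp
    try ring
  -- RHS computation via pull-out
  have hinvπm : Measurable[m] (fun ω => 1 / πV ω) := measurable_const.div hπm
  have hinv1πm : Measurable[m] (fun ω => 1 / (1 - πV ω)) :=
    measurable_const.div (measurable_const.sub hπm)
  have hinvb : ∀ᵐ ω ∂μ, |1 / πV ω| ≤ δ⁻¹ := by
    filter_upwards [hπbound] with ω h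
    have := hdivb 1 _ h.1
    simpa using this
  have hinv1b : ∀ᵐ ω ∂μ, |1 / (1 - πV ω)| ≤ δ⁻¹ := by
    filter_upwards [hπbound] with ω h
    have := hdivb 1 _ (show δ ≤ 1 - πV ω by linarith [h.2])
    simpa using this
  have ht1mul : Integrable (fun ω => (1 / πV ω) * (U ω - eU ω) ^ 2) μ := by
    refine bdd_int _ (fun ω => δ⁻¹ * (U ω - eU ω) ^ 2)
      ((measurable_const.div hπ).mul ((hU.sub heU).pow_const 2)).aestronglyMeasurable
      (hUtsq.const_mul _) ?_
    filter_upwards [hinvb] with ω h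
    rw [abs_mul, abs_pow, sq_abs]
    exact mul_le_mul_of_nonneg_right h (sq_nonneg _)
  have ht2mul : Integrable (fun ω => (1 / (1 - πV ω)) * (S ω - eS ω) ^ 2) μ := by
    refine bdd_int _ (fun ω => δ⁻¹ * (S ω - eS ω) ^ 2)
      ((measurable_const.div (measurable_const.sub hπ)).mul
        ((hS.sub heS).pow_const 2)).aestronglyMeasurable
      (hStsq.const_mul _) ?_
    filter_upwards [hinv1b] with ω h
    rw [abs_mul, abs_pow, sq_abs]
    exact mul_le_mul_of_nonneg_right h (sq_nonneg _)
  have rhs1 : ∫ ω, (1 / πV ω) * (μ[fun ω' => (U ω' - eU ω') ^ 2 | m]) ω ∂μ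
      = ∫ ω, (1 / πV ω) * (U ω - eU ω) ^ 2 ∂μ :=
    pullout_integral' hm hinvπm.stronglyMeasurable ht1mul hUtsq
  have rhs2 : ∫ ω, (1 / (1 - πV ω)) * (μ[fun ω' => (S ω' - eS ω') ^ 2 | m]) ω ∂μ
      = ∫ ω, (1 / (1 - πV ω)) * (S ω - eS ω) ^ 2 ∂μ :=
    pullout_integral' hm hinv1πm.stronglyMeasurable ht2mul hStsq
  -- integrability of the RHS summands
  have ht1int : Integrable (fun ω => (1 / πV ω) * (μ[fun ω' => (U ω' - eU ω') ^ 2 | m]) ω) μ := by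
    refine bdd_int _ (fun ω => δ⁻¹ * |(μ[fun ω' => (U ω' - eU ω') ^ 2 | m]) ω|)
      (((measurable_const.div hπ)).aestronglyMeasurable.mul
        (stronglyMeasurable_condExp.mono hm).aestronglyMeasurable)
      (integrable_condExp.abs.const_mul _) ?_
    filter_upwards [hinvb] with ω h
    rw [abs_mul]
    exact mul_le_mul_of_nonneg_right h (abs_nonneg _)
  have ht2int : Integrable
      (fun ω => (1 / (1 - πV ω)) * (μ[fun ω' => (S ω' - eS ω') ^ 2 | m]) ω) μ := by
    refine bdd_int _ (fun ω => δ⁻¹ * |(μ[fun ω' => (S ω' - eS ω') ^ 2 | m]) ω|)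
      (((measurable_const.div (measurable_const.sub hπ))).aestronglyMeasurable.mul
        (stronglyMeasurable_condExp.mono hm).aestronglyMeasurable)
      (integrable_condExp.abs.const_mul _) ?_
    filter_upwards [hinv1b] with ω h
    rw [abs_mul]
    exact mul_le_mul_of_nonneg_right h (abs_nonneg _)
  calc ∫ ω, D ω ^ 2 ∂μ
      = ∫ ω, R ω * ((U ω - eU ω) ^ 2 / πV ω ^ 2) ∂μ
        + ∫ ω, (1 - R ω) * ((S ω - eS ω) ^ 2 / (1 - πV ω) ^ 2) ∂μ := lhs1
    _ = ∫ ω, (1 / πV ω) * (U ω - eU ω) ^ 2 ∂μ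
        + ∫ ω, (1 / (1 - πV ω)) * (S ω - eS ω) ^ 2 ∂μ := by rw [lhs2, lhs3]
    _ = ∫ ω, (1 / πV ω) * (μ[fun ω' => (U ω' - eU ω') ^ 2 | m]) ω ∂μ
        + ∫ ω, (1 / (1 - πV ω)) * (μ[fun ω' => (S ω' - eS ω') ^ 2 | m]) ω ∂μ := by
        rw [rhs1, rhs2]
    _ = ∫ ω, ((1 / πV ω) * (μ[fun ω' => (U ω' - eU ω') ^ 2 | m]) ω
        + (1 / (1 - πV ω)) * (μ[fun ω' => (S ω' - eS ω') ^ 2 | m]) ω) ∂μ :=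
        (integral_add ht1int ht2int).symm

/-- The efficient influence term
`D = (R/π(V))·(U - E[U|σ(V)]) - ((1-R)/(1-π(V)))·(S - E[S|σ(V)])` has mean zero and
second moment `E[(1/π(V))·Var(U|σ(V)) + (1/(1-π(V)))·Var(S|σ(V))]`, the quantity `Ω`
in the paper's semiparametric efficiency bound (Proposition 2). -/
theorem stmt_17 {Ω : Type*} [MeasurableSpace Ω] (μ : Measure Ω) [IsProbabilityMeasure μ]
    (R Y W V : Ω → ℝ) (hR : Measurable R) (hY : Measurable Y)
    (hW : Measurable W) (hV : Measurable V)
    (hR01 : ∀ ω, R ω = 0 ∨ R ω = 1)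
    (πV : Ω → ℝ)
    (hπmeas : Measurable[MeasurableSpace.comap V inferInstance] πV)
    (hπver : πV =ᵐ[μ] μ[R | MeasurableSpace.comap V inferInstance])
    (δ : ℝ) (hδ : δ ∈ Set.Ioo (0 : ℝ) 1)
    (hπbound : ∀ᵐ ω ∂μ, δ ≤ πV ω ∧ πV ω ≤ 1 - δ)
    (hCI : CondIndepGiven μ (MeasurableSpace.comap V inferInstance)
      (fun ω => (Y ω, W ω)) R)
    (u s : ℝ × ℝ → ℝ) (hu : Measurable u) (hs : Measurable s)
    (hU2 : MemLp (fun ω => u (Y ω, V ω)) 2 μ)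
    (hS2 : MemLp (fun ω => s (W ω, V ω)) 2 μ)
    (eU : Ω → ℝ)
    (heUmeas : Measurable[MeasurableSpace.comap V inferInstance] eU)
    (heUver : eU =ᵐ[μ]
      μ[fun ω => u (Y ω, V ω) | MeasurableSpace.comap V inferInstance])
    (eS : Ω → ℝ)
    (heSmeas : Measurable[MeasurableSpace.comap V inferInstance] eS)
    (heSver : eS =ᵐ[μ]
      μ[fun ω => s (W ω, V ω) | MeasurableSpace.comap V inferInstance])
    (D : Ω → ℝ)
    (hD : D = fun ω => (R ω / πV ω) * (u (Y ω, V ω) - eU ω)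
      - ((1 - R ω) / (1 - πV ω)) * (s (W ω, V ω) - eS ω)) :
    (∫ ω, D ω ∂μ = 0) ∧
    ∫ ω, D ω ^ 2 ∂μ
      = ∫ ω, ((1 / πV ω) *
          (μ[fun ω' => (u (Y ω', V ω') - eU ω') ^ 2
              | MeasurableSpace.comap V inferInstance]) ω
        + (1 / (1 - πV ω)) *
          (μ[fun ω' => (s (W ω', V ω') - eS ω') ^ 2
              | MeasurableSpace.comap V inferInstance]) ω) ∂μ := by
  have hYW : Measurable fun ω => (Y ω, W ω) := hY.prodMk hW
  have hcondM := condexp_sup_aux μ R Y W V hR hY hW hV hR01 πV hπmeas hπver δ hδ.1 hπbound hCI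
  have hYM : Measurable[MeasurableSpace.comap (fun ω => (Y ω, W ω)) inferInstance
      ⊔ MeasurableSpace.comap V inferInstance] (fun ω => (Y ω, W ω)) :=
    Measurable.of_comap_le le_sup_left
  have hVM : Measurable[MeasurableSpace.comap (fun ω => (Y ω, W ω)) inferInstance
      ⊔ MeasurableSpace.comap V inferInstance] V :=
    Measurable.of_comap_le le_sup_right
  have hUM : Measurable[MeasurableSpace.comap (fun ω => (Y ω, W ω)) inferInstance
      ⊔ MeasurableSpace.comap V inferInstance] (fun ω => u (Y ω, V ω)) :=
    hu.comp ((measurable_fst.comp hYM).prodMk hVM)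
  have hSM : Measurable[MeasurableSpace.comap (fun ω => (Y ω, W ω)) inferInstance
      ⊔ MeasurableSpace.comap V inferInstance] (fun ω => s (W ω, V ω)) :=
    hs.comp ((measurable_snd.comp hYM).prodMk hVM)
  exact main_aux_s17 μ R hR hR01 (fun ω => u (Y ω, V ω)) (fun ω => s (W ω, V ω)) πV eU eS
    hV.comap_le le_sup_right (sup_le hYW.comap_le hV.comap_le)
    hπmeas heUmeas heSmeas hUM hSM hcondM δ hδ.1 hπbound hU2 hS2 heUver heSver D hD
end
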